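/- arXiv:1711.06060 — 6 statements merged into one kernel-verified Lean document; each statement's English description precedes it below -/
import Mathlib

section
/- Let n ≥ 1 and m ≥ 1 be integers and let A = (a_{ij}) be a 2 × m matrix whose entries a_{ij} are homogeneous polynomials of degree 1 in k[x₀, …, x_n]. Assume that for every nonzero vector v ∈ k^{n+1} the scalar matrix A(v) = (a_{ij}(v)) ∈ M_{2×m}(k) has rank 2 (i.e., A defines an epimorphism of vector bundles m·O_{ℙⁿ} → 2·O_{ℙⁿ}(1)). Then for every pair (g₁, g₂) of homogeneous polynomials of degree 2 in k[x₀, …, x_n] there exist homogeneous polynomials f₁, …, f_m of degree 1 such that Σ_{j=1}^m a_{1j} f_j = g₁ and Σ_{j=1}^m a_{2j} f_j = g₂ (i.e., the induced map H⁰(m·O(1)) → H⁰(2·O(2)) is surjective). -/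
open MvPolynomial

set_option linter.unusedSectionVars false
set_option linter.unusedVariables false

namespace Stmt2Aux

open Matrix

variable {k : Type*} [Field k] [IsAlgClosed k] [CharZero k]

theorem eq_zero_of_mulVec {N M : ℕ} (A : Matrix (Fin N) (Fin M) k)
    (h : ∀ v, A *ᵥ v = 0) : A = 0 := by
  ext p q
  have := congrFun (h (Pi.single q 1)) p
  rw [Matrix.mulVec_single] at this
  simpa using this

theorem eval_charpoly' {r : ℕ} (M : Matrix (Fin r) (Fin r) k) (t : k) :
    (Matrix.charpoly M).eval t = Matrix.det (t • (1 : Matrix (Fin r) (Fin r) k) - M) := by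
  rw [Matrix.charpoly, show (Polynomial.eval t : Polynomial k → k) = Polynomial.evalRingHom t from rfl,
    RingHom.map_det]
  congr 1
  ext p q
  by_cases h : p = q
  · subst h
    simp [Matrix.charmatrix_apply_eq, Matrix.one_apply]
  · simp [Matrix.charmatrix_apply_ne _ _ _ h, Matrix.one_apply, h]

theorem lemA {NN m : ℕ} (U : Fin 2 → Matrix (Fin NN) (Fin m) k)
    (hU : ∀ (s t : k) (v : Fin NN → k), ¬(s = 0 ∧ t = 0) → v ≠ 0 →
      Matrix.vecMul v (s • U 0 + t • U 1) ≠ 0)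
    (S : Fin 2 → Matrix (Fin NN) (Fin NN) k) (hsym : ∀ i, (S i)ᵀ = S i)
    (hS : S 0 * U 0 + S 1 * U 1 = 0) : ∀ i, S i = 0 := by
  classical
  have hS' : S 0 * U 0 = -(S 1 * U 1) := by rwa [add_eq_zero_iff_eq_neg] at hS
  have hS'' : S 1 * U 1 = -(S 0 * U 0) := by rw [hS', neg_neg]
  -- the key step
  have key : ∀ (s t : k), ¬(s = 0 ∧ t = 0) → ∀ w : Fin NN → k,
      (t • S 0 - s • S 1) *ᵥ w = 0 → S 0 *ᵥ w = 0 ∧ S 1 *ᵥ w = 0 := by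
    intro s t hst w hw
    set R := t • S 0 - s • S 1 with hR
    have hRsym : Rᵀ = R := by
      rw [hR, Matrix.transpose_sub, Matrix.transpose_smul, Matrix.transpose_smul,
        hsym, hsym]
    have hwR : w ᵥ* R = 0 := by rw [← hRsym, Matrix.vecMul_transpose, hw]
    have h0 : S 0 * (s • U 0 + t • U 1) = R * U 1 := by
      rw [hR, Matrix.mul_add, Matrix.mul_smul, Matrix.mul_smul, hS', Matrix.sub_mul,
        Matrix.smul_mul, Matrix.smul_mul, smul_neg]
      abel
    have h1 : S 1 * (s • U 0 + t • U 1) = (-R) * U 0 := by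
      rw [hR, Matrix.mul_add, Matrix.mul_smul, Matrix.mul_smul, hS'', Matrix.neg_mul,
        Matrix.sub_mul, Matrix.smul_mul, Matrix.smul_mul, smul_neg, neg_sub]
      abel
    constructor
    · by_contra hne
      apply hU s t _ hst hne
      have hv : S 0 *ᵥ w = w ᵥ* S 0 := by
        conv_lhs => rw [← hsym 0]
        rw [Matrix.mulVec_transpose]
      rw [hv, Matrix.vecMul_vecMul, h0, ← Matrix.vecMul_vecMul, hwR, Matrix.zero_vecMul]
    · by_contra hne
      apply hU s t _ hst hne
      have hv : S 1 *ᵥ w = w ᵥ* S 1 := by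
        conv_lhs => rw [← hsym 1]
        rw [Matrix.mulVec_transpose]
      rw [hv, Matrix.vecMul_vecMul, h1, Matrix.neg_mul, Matrix.vecMul_neg,
        ← Matrix.vecMul_vecMul, hwR, Matrix.zero_vecMul, neg_zero]
  by_cases hN : ∀ w, S 0 *ᵥ w = 0 ∧ S 1 *ᵥ w = 0
  · intro i
    apply eq_zero_of_mulVec
    intro v
    fin_cases i
    exacts [(hN v).1, (hN v).2]
  exfalso
  obtain ⟨w₀, hw₀⟩ := not_forall.mp hN
  set Nsub : Submodule k (Fin NN → k) :=
    LinearMap.ker (Matrix.mulVecLin (S 0)) ⊓ LinearMap.ker (Matrix.mulVecLin (S 1)) with hNsubdef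
  have hmem : ∀ v, v ∈ Nsub ↔ (S 0 *ᵥ v = 0 ∧ S 1 *ᵥ v = 0) := by
    intro v
    simp [hNsubdef, Matrix.mulVecLin_apply, Submodule.mem_inf, LinearMap.mem_ker]
  have hNne : Nsub ≠ ⊤ := by
    intro h
    exact hw₀ ((hmem w₀).mp (h ▸ Submodule.mem_top))
  obtain ⟨W, hW⟩ := Submodule.exists_isCompl Nsub
  have hr : Module.finrank k W ≠ 0 := by
    intro h0
    have hbot : W = ⊥ := Submodule.finrank_eq_zero.mp h0
    apply hNne
    have := hW.sup_eq_top
    rwa [hbot, sup_bot_eq] at this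
  set r := Module.finrank k W with hrdef
  let b : Module.Basis (Fin r) k W := Module.finBasis k W
  set P : Matrix (Fin NN) (Fin r) k := Matrix.of (fun p l => (b l : Fin NN → k) p) with hPdef
  have hPx : ∀ x : Fin r → k, P *ᵥ x = ((∑ l, x l • b l : W) : Fin NN → k) := by
    intro x
    funext p
    rw [Matrix.mulVec]
    simp only [dotProduct, hPdef, Matrix.of_apply]
    rw [show (((∑ l, x l • b l : W) : Fin NN → k)) = ∑ l, x l • (b l : Fin NN → k) by
      push_cast; simp]
    simp [Finset.sum_apply, mul_comm]
  have hPW : ∀ x, (P *ᵥ x) ∈ W := by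
    intro x
    rw [hPx]
    exact Submodule.coe_mem _
  have hPinj : ∀ x, P *ᵥ x = 0 → x = 0 := by
    intro x hx
    rw [hPx] at hx
    have h1 : (∑ l, x l • b l : W) = 0 := by
      apply Subtype.ext
      simpa using hx
    have h2 : b.equivFun.symm x = 0 := by rwa [Module.Basis.equivFun_symm_apply]
    simpa using (LinearEquiv.map_eq_zero_iff _).mp h2
  set CC : Fin 2 → Matrix (Fin r) (Fin r) k := fun i => Pᵀ * S i * P with hCCdef
  have hdet : ∀ s t : k, ¬(s = 0 ∧ t = 0) → (t • CC 0 - s • CC 1).det ≠ 0 := by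
    intro s t hst hd
    obtain ⟨x, hx0, hx⟩ := (Matrix.exists_mulVec_eq_zero_iff).mpr hd
    set R := t • S 0 - s • S 1 with hR
    have hRsym : Rᵀ = R := by
      rw [hR, Matrix.transpose_sub, Matrix.transpose_smul, Matrix.transpose_smul,
        hsym, hsym]
    have hcomb : t • CC 0 - s • CC 1 = Pᵀ * R * P := by
      simp only [hCCdef, hR]
      simp [Matrix.mul_sub, Matrix.sub_mul, Matrix.mul_smul, Matrix.smul_mul]
    set w := P *ᵥ x with hwdef
    set z := R *ᵥ w with hzdef
    have hPz : Pᵀ *ᵥ z = 0 := by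
      have hx' : (Pᵀ * R * P) *ᵥ x = 0 := by rw [← hcomb]; exact hx
      rw [Matrix.mul_assoc, ← Matrix.mulVec_mulVec, ← Matrix.mulVec_mulVec] at hx'
      exact hx'
    have hz : z = 0 := by
      have hWz : ∀ l : Fin r, (b l : Fin NN → k) ⬝ᵥ z = 0 := by
        intro l
        have := congrFun hPz l
        simpa [Matrix.mulVec, dotProduct, hPdef] using this
      have hWz' : ∀ v ∈ W, v ⬝ᵥ z = 0 := by
        intro v hv
        have hrepr : v = ∑ l, b.repr ⟨v, hv⟩ l • (b l : Fin NN → k) := by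
          have := b.sum_repr ⟨v, hv⟩
          have := congrArg (Subtype.val) this
          push_cast at this
          exact this.symm
        rw [hrepr]
        simp only [dotProduct, Finset.sum_apply, Pi.smul_apply, smul_eq_mul,
          Finset.sum_mul]
        rw [Finset.sum_comm]
        refine Finset.sum_eq_zero fun l _ => ?_
        have h := hWz l
        simp only [dotProduct] at h
        simp only [mul_assoc, ← Finset.mul_sum, h, mul_zero]
      have hNz : ∀ v ∈ Nsub, v ⬝ᵥ z = 0 := by
        intro v hv
        rw [hzdef, Matrix.dotProduct_mulVec]
        have hvR : v ᵥ* R = 0 := by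
          conv_lhs => rw [← hRsym]
          rw [Matrix.vecMul_transpose, hR, Matrix.sub_mulVec,
            Matrix.smul_mulVec, Matrix.smul_mulVec,
            ((hmem v).mp hv).1, ((hmem v).mp hv).2]
          simp
        rw [hvR, zero_dotProduct]
      funext p
      have hv : Pi.single p 1 ∈ Nsub ⊔ W := by rw [hW.sup_eq_top]; trivial
      obtain ⟨v1, hv1, v2, hv2, hsum⟩ := Submodule.mem_sup.mp hv
      have := congrArg (· ⬝ᵥ z) hsum
      simp only [add_dotProduct] at this
      rw [hNz v1 hv1, hWz' v2 hv2, add_zero, single_dotProduct, one_mul] at this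
      exact this.symm
    have hwN : w ∈ Nsub := (hmem w).mpr (key s t hst w hz)
    have hw0 : w = 0 := by
      have := Submodule.disjoint_def.mp hW.disjoint w hwN (hPW x)
      exact this
    exact hx0 (hPinj x hw0)
  have h0 : (CC 0).det ≠ 0 := by
    have := hdet 0 1 (by simp)
    simpa using this
  set M := (CC 0)⁻¹ * CC 1 with hMdef
  have hdeg : (Matrix.charpoly M).degree ≠ 0 := by
    rw [Polynomial.degree_eq_natDegree (Matrix.charpoly_monic M).ne_zero,
      Matrix.charpoly_natDegree_eq_dim, Fintype.card_fin]
    exact_mod_cast hr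
  obtain ⟨t₀, ht₀⟩ := IsAlgClosed.exists_root _ hdeg
  have hzero : (t₀ • CC 0 - (1 : k) • CC 1).det = 0 := by
    have hfac : t₀ • CC 0 - (1 : k) • CC 1 = CC 0 * (t₀ • 1 - M) := by
      rw [Matrix.mul_sub, Matrix.mul_smul, Matrix.mul_one, hMdef, ← Matrix.mul_assoc,
        Matrix.mul_nonsing_inv _ (isUnit_iff_ne_zero.mpr h0), Matrix.one_mul, one_smul]
    rw [hfac, Matrix.det_mul, ← eval_charpoly', ht₀, mul_zero]
  exact hdet 1 t₀ (by simp) hzero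


theorem lemB {NN m : ℕ} (U : Fin 2 → Matrix (Fin NN) (Fin m) k)
    (hU : ∀ (s t : k) (v : Fin NN → k), ¬(s = 0 ∧ t = 0) → v ≠ 0 →
      Matrix.vecMul v (s • U 0 + t • U 1) ≠ 0)
    (G : Fin 2 → Matrix (Fin NN) (Fin NN) k) (hGsym : ∀ i, (G i)ᵀ = G i) :
    ∃ F : Matrix (Fin NN) (Fin m) k, ∀ i, U i * Fᵀ + F * (U i)ᵀ = G i := by
  classical
  set Φ : Matrix (Fin NN) (Fin m) k →ₗ[k] (Fin 2 → Matrix (Fin NN) (Fin NN) k) :=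
    { toFun := fun F => fun i => U i * Fᵀ + F * (U i)ᵀ
      map_add' := by
        intro F F'
        funext i
        simp [Matrix.transpose_add, Matrix.mul_add, Matrix.add_mul]
        abel
      map_smul' := by
        intro c F
        funext i
        simp [Matrix.transpose_smul, Matrix.mul_smul, Matrix.smul_mul, smul_add] } with hΦdef
  suffices hmem : G ∈ LinearMap.range Φ by
    obtain ⟨F, hF⟩ := hmem
    exact ⟨F, fun i => congrFun hF i⟩
  by_contra hG
  obtain ⟨φ, hφG, hφmap⟩ :=
    Submodule.exists_dual_map_eq_bot_of_notMem hG inferInstance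
  have hker : ∀ F : Matrix (Fin NN) (Fin m) k, φ (fun i => U i * Fᵀ + F * (U i)ᵀ) = 0 := by
    intro F
    have h1 : Φ F ∈ LinearMap.range Φ := ⟨F, rfl⟩
    have h2 : φ (Φ F) ∈ (LinearMap.range Φ).map φ := Submodule.mem_map_of_mem h1
    rw [hφmap, Submodule.mem_bot] at h2
    exact h2
  set PM : Fin 2 → Matrix (Fin NN) (Fin NN) k :=
    fun i => Matrix.of fun p q => φ (Pi.single i (Matrix.single p q (1:k))) with hPMdef
  have hsum : ∀ M : Fin 2 → Matrix (Fin NN) (Fin NN) k,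
      φ M = ∑ i, ∑ p, ∑ q, M i p q * PM i p q := by
    intro M
    have hdecomp : M = ∑ i, ∑ p, ∑ q, M i p q •
        (Pi.single i (Matrix.single p q (1:k)) : Fin 2 → Matrix (Fin NN) (Fin NN) k) := by
      funext i'
      ext p' q'
      simp only [Finset.sum_apply, Matrix.sum_apply, Pi.smul_apply, Pi.single_apply,
        ite_apply, Matrix.zero_apply, Pi.zero_apply, Matrix.smul_apply, smul_ite, smul_zero,
        smul_eq_mul, Matrix.single, Matrix.of_apply, mul_ite, mul_one, mul_zero,
        ite_and]
      fin_cases i' <;>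
        simp [apply_ite (fun (A : Matrix (Fin NN) (Fin NN) k) => A p' q'),
          Finset.sum_ite_eq, Finset.sum_ite_eq']
    conv_lhs => rw [hdecomp]
    rw [map_sum]
    simp only [map_sum, _root_.map_smul, smul_eq_mul]
    rfl
  set SM : Fin 2 → Matrix (Fin NN) (Fin NN) k := fun i => PM i + (PM i)ᵀ with hSMdef
  have e1 : ∀ (qq : Fin NN) (jj : Fin m) (i : Fin 2) (p q' : Fin NN),
      (U i * (Matrix.single qq jj (1:k))ᵀ) p q' = if q' = qq then U i p jj else 0 := by
    intro qq jj i p q'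
    by_cases hq : q' = qq
    · subst hq
      simp [Matrix.mul_apply, Matrix.single, ite_and, mul_ite, Finset.sum_ite_eq]
    · simp [Matrix.mul_apply, Matrix.single, ite_and, mul_ite, hq, Ne.symm hq]
  have e2 : ∀ (qq : Fin NN) (jj : Fin m) (i : Fin 2) (p q' : Fin NN),
      ((Matrix.single qq jj (1:k)) * (U i)ᵀ) p q' = if p = qq then U i q' jj else 0 := by
    intro qq jj i p q'
    by_cases hq : p = qq
    · subst hq
      simp [Matrix.mul_apply, Matrix.single, ite_and, mul_ite, Finset.sum_ite_eq]
    · simp [Matrix.mul_apply, Matrix.single, ite_and, mul_ite, hq, Ne.symm hq]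
  have hid : ∀ (q : Fin NN) (j : Fin m),
      (∑ p, U 0 p j * (PM 0 p q + PM 0 q p)) + (∑ p, U 1 p j * (PM 1 p q + PM 1 q p)) = 0 := by
    intro q j
    have key_i : ∀ i : Fin 2,
        (∑ p, ∑ q', ((U i * (Matrix.single q j (1:k))ᵀ
            + (Matrix.single q j (1:k)) * (U i)ᵀ) p q') * PM i p q')
        = ∑ p, U i p j * (PM i p q + PM i q p) := by
      intro i
      have step1 : ∀ (p q' : Fin NN), ((U i * (Matrix.single q j (1:k))ᵀ
            + (Matrix.single q j (1:k)) * (U i)ᵀ) p q') * PM i p q'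
          = (if q' = q then U i p j * PM i p q' else 0)
            + (if p = q then U i q' j * PM i p q' else 0) := by
        intro p q'
        rw [Matrix.add_apply, e1, e2, add_mul]
        congr 1
        · split <;> simp
        · split <;> simp
      rw [show (∑ p, ∑ q', ((U i * (Matrix.single q j (1:k))ᵀ
            + (Matrix.single q j (1:k)) * (U i)ᵀ) p q') * PM i p q')
          = ∑ p, ∑ q', ((if q' = q then U i p j * PM i p q' else 0)
            + (if p = q then U i q' j * PM i p q' else 0)) from
        Finset.sum_congr rfl fun p _ => Finset.sum_congr rfl fun q' _ => step1 p q']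
      simp only [Finset.sum_add_distrib, mul_add]
      congr 1
      · refine Finset.sum_congr rfl fun p _ => ?_
        simp [Finset.sum_ite_eq']
      · rw [Finset.sum_comm]
        refine Finset.sum_congr rfl fun q' _ => ?_
        simp [Finset.sum_ite_eq']
    have hker' := hker (Matrix.single q j (1:k))
    rw [hsum] at hker'
    simp only [Fin.sum_univ_two] at hker'
    rw [key_i 0, key_i 1] at hker'
    exact hker'
  have hSMsym : ∀ i, (SM i)ᵀ = SM i := by
    intro i
    simp only [hSMdef, Matrix.transpose_add, Matrix.transpose_transpose]
    exact add_comm _ _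
  have hSU : SM 0 * U 0 + SM 1 * U 1 = 0 := by
    ext q' j
    simp only [Matrix.add_apply, Matrix.mul_apply, hSMdef, Matrix.transpose_apply,
      Matrix.zero_apply]
    calc (∑ p, (PM 0 q' p + PM 0 p q') * U 0 p j) + (∑ p, (PM 1 q' p + PM 1 p q') * U 1 p j)
        = (∑ p, U 0 p j * (PM 0 p q' + PM 0 q' p)) + (∑ p, U 1 p j * (PM 1 p q' + PM 1 q' p)) := by
          congr 1 <;> exact Finset.sum_congr rfl fun p _ => by ring
      _ = 0 := hid q' j
  have hSM0 := lemA U hU SM hSMsym hSU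
  have hPManti : ∀ (i : Fin 2) (p q' : Fin NN), PM i p q' + PM i q' p = 0 := by
    intro i p q'
    have h := congrFun (congrFun (hSM0 i) p) q'
    simpa [hSMdef, Matrix.add_apply, Matrix.transpose_apply] using h
  apply hφG
  have hA : φ G = ∑ i, ∑ p, ∑ q', G i p q' * PM i p q' := hsum G
  have hB : φ G = ∑ i, ∑ p, ∑ q', G i p q' * PM i q' p := by
    rw [hA]
    refine Finset.sum_congr rfl fun i _ => ?_
    rw [Finset.sum_comm]
    refine Finset.sum_congr rfl fun p _ => Finset.sum_congr rfl fun q' _ => ?_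
    have hGpq : G i q' p = G i p q' := congrFun (congrFun (hGsym i) p) q'
    rw [hGpq]
  have h2 : φ G + φ G = ∑ i, ∑ p, ∑ q', (G i p q' * PM i p q' + G i p q' * PM i q' p) := by
    simp only [Finset.sum_add_distrib]
    rw [← hA, ← hB]
  have h3 : φ G + φ G = 0 := by
    rw [h2]
    refine Finset.sum_eq_zero fun i _ => Finset.sum_eq_zero fun p _ =>
      Finset.sum_eq_zero fun q' _ => ?_
    rw [← mul_add, hPManti, mul_zero]
  have h4 : (2:k) * φ G = 0 := by rw [two_mul]; exact h3
  exact (mul_eq_zero.mp h4).resolve_left two_ne_zero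

theorem degree_toMultiset {N : ℕ} (d : Fin N →₀ ℕ) :
    Multiset.card (Finsupp.toMultiset d) = d.degree := by
  rw [Finsupp.card_toMultiset]
  rfl

theorem classify1 {N : ℕ} {d : Fin N →₀ ℕ} (hd : d.degree = 1) :
    ∃ p, d = Finsupp.single p 1 := by
  have h1 : Multiset.card (Finsupp.toMultiset d) = 1 := by rw [degree_toMultiset, hd]
  obtain ⟨a, ha⟩ := Multiset.card_eq_one.mp h1
  refine ⟨a, ?_⟩
  have := congrArg Multiset.toFinsupp ha
  rwa [Finsupp.toMultiset_toFinsupp, Multiset.toFinsupp_singleton] at this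

theorem classify2 {N : ℕ} {d : Fin N →₀ ℕ} (hd : d.degree = 2) :
    ∃ p q, d = Finsupp.single p 1 + Finsupp.single q 1 := by
  have h1 : Multiset.card (Finsupp.toMultiset d) = 2 := by rw [degree_toMultiset, hd]
  obtain ⟨x, y, hxy⟩ := Multiset.card_eq_two.mp h1
  refine ⟨x, y, ?_⟩
  have := congrArg Multiset.toFinsupp hxy
  rw [Finsupp.toMultiset_toFinsupp] at this
  rw [this, show ({x, y} : Multiset (Fin N)) = {x} + {y} by
    rw [Multiset.insert_eq_cons, ← Multiset.singleton_add], map_add,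
    Multiset.toFinsupp_singleton, Multiset.toFinsupp_singleton]

theorem deg_ee {N : ℕ} (p q : Fin N) :
    (Finsupp.single p 1 + Finsupp.single q 1).degree = 2 := by
  rw [← degree_toMultiset, map_add, Finsupp.toMultiset_single, Finsupp.toMultiset_single]
  simp

theorem uniq2 {N : ℕ} {p q p' q' : Fin N}
    (h : Finsupp.single p 1 + Finsupp.single q 1 = Finsupp.single p' 1 + Finsupp.single q' 1) :
    (p = p' ∧ q = q') ∨ (p = q' ∧ q = p') := by
  have hm := congrArg Finsupp.toMultiset h
  simp only [map_add, Finsupp.toMultiset_single, one_smul] at hm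
  rw [Multiset.singleton_add, Multiset.singleton_add] at hm
  rcases Multiset.cons_eq_cons.mp hm with ⟨h1, h2⟩ | ⟨_, cs, h1, h2⟩
  · left
    exact ⟨h1, Multiset.singleton_inj.mp h2⟩
  · right
    have hcs : cs = 0 := by
      have hcard := congrArg Multiset.card h1
      simp only [Multiset.card_singleton, Multiset.card_cons] at hcard
      exact Multiset.card_eq_zero.mp (by omega)
    subst hcs
    rw [Multiset.cons_zero] at h1 h2
    exact ⟨(Multiset.singleton_inj.mp h2).symm, Multiset.singleton_inj.mp h1⟩

theorem homog1_eq {N : ℕ} (a : MvPolynomial (Fin N) k) (ha : a.IsHomogeneous 1) :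
    a = ∑ p, coeff (Finsupp.single p 1) a • X p := by
  classical
  apply MvPolynomial.ext
  intro d
  rw [coeff_sum]
  simp only [coeff_smul, coeff_X', smul_eq_mul, mul_ite, mul_one, mul_zero]
  by_cases hd : d.degree = 1
  · obtain ⟨p₀, rfl⟩ := classify1 hd
    rw [Finset.sum_eq_single p₀]
    · rw [if_pos rfl]
    · intro p _ hp
      rw [if_neg]
      exact fun hc => hp ((Finsupp.single_left_inj one_ne_zero).mp hc)
    · intro h
      exact absurd (Finset.mem_univ p₀) h
  · rw [ha.coeff_eq_zero hd]
    refine (Finset.sum_eq_zero fun p _ => ?_).symm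
    rw [if_neg]
    intro hc
    apply hd
    rw [← hc]
    rw [show (Finsupp.single p (1:ℕ)).degree = 1 from by
      rw [← degree_toMultiset, Finsupp.toMultiset_single]; simp]

theorem homog2_eq {N : ℕ} (g : MvPolynomial (Fin N) k) (hg : g.IsHomogeneous 2) :
    g = ∑ p, ∑ q, (if p ≤ q then coeff (Finsupp.single p 1 + Finsupp.single q 1) g else 0)
      • (X p * X q) := by
  classical
  have hXX : ∀ p q : Fin N, (X p * X q : MvPolynomial (Fin N) k)
      = monomial (Finsupp.single p 1 + Finsupp.single q 1) (1:k) := by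
    intro p q
    rw [MvPolynomial.X, MvPolynomial.X, monomial_mul, mul_one]
  apply MvPolynomial.ext
  intro d
  rw [coeff_sum]
  simp only [coeff_sum, coeff_smul, hXX, coeff_monomial, smul_eq_mul, mul_ite, mul_one, mul_zero]
  by_cases hd : d.degree = 2
  · obtain ⟨p₁, q₁, hd1⟩ := classify2 hd
    obtain ⟨p₀, q₀, hle, hd0⟩ : ∃ p₀ q₀, p₀ ≤ q₀ ∧
        d = Finsupp.single p₀ 1 + Finsupp.single q₀ 1 := by
      rcases le_total p₁ q₁ with h | h
      · exact ⟨p₁, q₁, h, hd1⟩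
      · exact ⟨q₁, p₁, h, by rw [hd1, add_comm]⟩
    have hpt : ∀ p q : Fin N,
        (if Finsupp.single p 1 + Finsupp.single q 1 = d then
          (if p ≤ q then coeff (Finsupp.single p 1 + Finsupp.single q 1) g else 0) else 0)
        = if q = q₀ ∧ p = p₀ then coeff d g else 0 := by
      intro p q
      by_cases h1 : Finsupp.single p 1 + Finsupp.single q 1 = d
      · rw [if_pos h1, h1]
        rcases uniq2 (h1.trans hd0) with ⟨rfl, rfl⟩ | ⟨hpq, hqp⟩
        · rw [if_pos hle, if_pos ⟨rfl, rfl⟩]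
        · rw [hpq, hqp]
          by_cases h2 : q₀ ≤ p₀
          · have heq : p₀ = q₀ := le_antisymm hle h2
            subst heq
            simp
          · rw [if_neg h2, if_neg]
            rintro ⟨ha, -⟩
            exact h2 (le_of_eq ha.symm)
      · rw [if_neg h1, if_neg]
        rintro ⟨hq, hp⟩
        apply h1
        rw [hp, hq, ← hd0]
    rw [Finset.sum_congr rfl fun p _ => Finset.sum_congr rfl fun q _ => hpt p q]
    simp [ite_and, Finset.sum_ite_eq', Finset.sum_ite_eq]
  · rw [hg.coeff_eq_zero hd]
    refine (Finset.sum_eq_zero fun p _ => Finset.sum_eq_zero fun q _ => ?_).symm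
    rw [if_neg]
    intro hc
    exact hd (by rw [← hc, deg_ee])

end Stmt2Aux

open Stmt2Aux Matrix in
/-- If a `2 × m` matrix of linear forms on `ℙⁿ` has rank `2` at every point (i.e. it
defines an epimorphism `m·O → 2·O(1)`), then the induced map on global sections
`H⁰(m·O(1)) → H⁰(2·O(2))` is surjective. -/
theorem stmt_2 {k : Type*} [Field k] [IsAlgClosed k] [CharZero k]
    (n m : ℕ) (hn : 1 ≤ n) (hm : 1 ≤ m)
    (a : Fin 2 → Fin m → MvPolynomial (Fin (n + 1)) k)
    (ha : ∀ i j, (a i j).IsHomogeneous 1)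
    (hrank : ∀ v : Fin (n + 1) → k, v ≠ 0 →
      Matrix.rank (Matrix.of fun i j => eval v (a i j)) = 2) :
    ∀ g : Fin 2 → MvPolynomial (Fin (n + 1)) k, (∀ i, (g i).IsHomogeneous 2) →
      ∃ f : Fin m → MvPolynomial (Fin (n + 1)) k,
        (∀ j, (f j).IsHomogeneous 1) ∧ ∀ i, ∑ j, a i j * f j = g i := by
  classical
  intro g hg
  set U : Fin 2 → Matrix (Fin (n+1)) (Fin m) k :=
    fun i => Matrix.of fun p j => coeff (Finsupp.single p 1) (a i j) with hUdef
  have haeq : ∀ i j, a i j = ∑ p, U i p j • X p := fun i j => homog1_eq _ (ha i j)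
  have heval : ∀ (v : Fin (n+1) → k) i j, eval v (a i j) = ∑ p, U i p j * v p := by
    intro v i j
    conv_lhs => rw [haeq i j]
    rw [map_sum]
    refine Finset.sum_congr rfl fun p _ => ?_
    rw [smul_eq_C_mul, _root_.map_mul, eval_C, eval_X]
  have hU : ∀ (s t : k) (v : Fin (n+1) → k), ¬(s = 0 ∧ t = 0) → v ≠ 0 →
      Matrix.vecMul v (s • U 0 + t • U 1) ≠ 0 := by
    intro s t v hst hv hcon
    set A : Matrix (Fin 2) (Fin m) k := Matrix.of fun i j => eval v (a i j) with hAdef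
    have hrk := hrank v hv
    have hsur : LinearMap.range A.mulVecLin = ⊤ := by
      apply Submodule.eq_top_of_finrank_eq
      rw [show Module.finrank k ↥(LinearMap.range A.mulVecLin) = A.rank from rfl, hrk,
        Module.finrank_pi, Fintype.card_fin]
    set c : Fin 2 → k := ![s, t] with hcdef
    have h1 : c ᵥ* A = 0 := by
      funext j
      have h2 := congrFun hcon j
      simp only [Matrix.vecMul, dotProduct, Matrix.add_apply, Matrix.smul_apply,
        smul_eq_mul, Pi.zero_apply] at h2 ⊢
      rw [Fin.sum_univ_two]
      simp only [hcdef, Matrix.cons_val_zero, Matrix.cons_val_one, Matrix.head_cons,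
        hAdef, Matrix.of_apply]
      rw [heval, heval, Finset.mul_sum, Finset.mul_sum, ← Finset.sum_add_distrib]
      rw [← h2]
      exact Finset.sum_congr rfl fun p _ => by ring
    have hc0 : ∀ i, c i = 0 := by
      intro i
      have hmem : (Pi.single i 1 : Fin 2 → k) ∈ LinearMap.range A.mulVecLin := by
        rw [hsur]; trivial
      obtain ⟨x, hx⟩ := hmem
      have h3 := Matrix.dotProduct_mulVec c A x
      rw [show A *ᵥ x = Pi.single i 1 from hx, h1, zero_dotProduct,
        dotProduct_single, mul_one] at h3
      exact h3
    apply hst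
    constructor
    · have := hc0 0; simpa [hcdef] using this
    · have := hc0 1; simpa [hcdef] using this
  set H : Fin 2 → Matrix (Fin (n+1)) (Fin (n+1)) k := fun i => Matrix.of fun p q =>
    if p ≤ q then coeff (Finsupp.single p 1 + Finsupp.single q 1) (g i) else 0 with hHdef
  set G : Fin 2 → Matrix (Fin (n+1)) (Fin (n+1)) k := fun i => H i + (H i)ᵀ with hGdef
  have hGsym : ∀ i, (G i)ᵀ = G i := by
    intro i
    simp only [hGdef, Matrix.transpose_add, Matrix.transpose_transpose]
    exact add_comm _ _
  obtain ⟨F, hF⟩ := lemB U hU G hGsym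
  refine ⟨fun j => ∑ q, F q j • X q, ?_, ?_⟩
  · intro j
    refine IsHomogeneous.sum _ _ _ fun q _ => ?_
    exact (homogeneousSubmodule (Fin (n+1)) k 1).smul_mem _ (isHomogeneous_X _ _)
  · intro i
    have hswap : ∀ M : Matrix (Fin (n+1)) (Fin (n+1)) k,
        (∑ p, ∑ q, M p q • (X p * X q : MvPolynomial (Fin (n+1)) k))
        = ∑ p, ∑ q, Mᵀ p q • (X p * X q) := by
      intro M
      rw [Finset.sum_comm]
      exact Finset.sum_congr rfl fun p _ => Finset.sum_congr rfl fun q _ => by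
        rw [Matrix.transpose_apply, mul_comm (X q) (X p)]
    have hprod : ∑ j, a i j * (∑ q, F q j • X q)
        = ∑ p, ∑ q, (U i * Fᵀ) p q • (X p * X q) := by
      calc ∑ j, a i j * (∑ q, F q j • X q)
          = ∑ j, ∑ p, ∑ q, (U i p j * F q j) • (X p * X q) := by
            refine Finset.sum_congr rfl fun j _ => ?_
            rw [haeq i j, Finset.sum_mul_sum]
            exact Finset.sum_congr rfl fun p _ => Finset.sum_congr rfl fun q _ =>
              smul_mul_smul_comm _ _ _ _
        _ = ∑ p, ∑ j, ∑ q, (U i p j * F q j) • (X p * X q) := Finset.sum_comm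
        _ = ∑ p, ∑ q, ∑ j, (U i p j * F q j) • (X p * X q) :=
            Finset.sum_congr rfl fun p _ => Finset.sum_comm
        _ = ∑ p, ∑ q, (U i * Fᵀ) p q • (X p * X q) := by
            refine Finset.sum_congr rfl fun p _ => Finset.sum_congr rfl fun q _ => ?_
            rw [Matrix.mul_apply, ← Finset.sum_smul]
            refine congrArg (· • (X p * X q)) ?_
            exact Finset.sum_congr rfl fun j _ => by rw [Matrix.transpose_apply]
    rw [hprod]
    have hgeq : g i = ∑ p, ∑ q, H i p q • (X p * X q : MvPolynomial (Fin (n+1)) k) := by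
      rw [hHdef]
      exact homog2_eq (g i) (hg i)
    have h2g : (2:k) • (∑ p, ∑ q, (U i * Fᵀ) p q • (X p * X q : MvPolynomial (Fin (n+1)) k))
        = (2:k) • g i := by
      rw [two_smul, two_smul]
      calc (∑ p, ∑ q, (U i * Fᵀ) p q • (X p * X q : MvPolynomial (Fin (n+1)) k))
            + (∑ p, ∑ q, (U i * Fᵀ) p q • (X p * X q : MvPolynomial (Fin (n+1)) k))
          = (∑ p, ∑ q, (U i * Fᵀ) p q • (X p * X q : MvPolynomial (Fin (n+1)) k))
            + (∑ p, ∑ q, (F * (U i)ᵀ) p q • (X p * X q : MvPolynomial (Fin (n+1)) k)) := by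
            congr 1
            rw [hswap]
            simp only [Matrix.transpose_mul, Matrix.transpose_transpose]
        _ = ∑ p, ∑ q, ((U i * Fᵀ + F * (U i)ᵀ) p q) • (X p * X q) := by
            rw [← Finset.sum_add_distrib]
            refine Finset.sum_congr rfl fun p _ => ?_
            rw [← Finset.sum_add_distrib]
            refine Finset.sum_congr rfl fun q _ => ?_
            rw [Matrix.add_apply, add_smul]
        _ = ∑ p, ∑ q, ((H i + (H i)ᵀ) p q) • (X p * X q) := by rw [hF i]
        _ = (∑ p, ∑ q, H i p q • (X p * X q))
            + (∑ p, ∑ q, (H i)ᵀ p q • (X p * X q)) := by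
            rw [← Finset.sum_add_distrib]
            refine Finset.sum_congr rfl fun p _ => ?_
            rw [← Finset.sum_add_distrib]
            refine Finset.sum_congr rfl fun q _ => ?_
            rw [Matrix.add_apply, add_smul]
        _ = g i + g i := by rw [← hswap (H i), ← hgeq]
    calc (∑ p, ∑ q, (U i * Fᵀ) p q • (X p * X q : MvPolynomial (Fin (n+1)) k))
        = ((2:k)⁻¹ * 2) • (∑ p, ∑ q, (U i * Fᵀ) p q • (X p * X q)) := by
          rw [inv_mul_cancel₀ (two_ne_zero), one_smul]
      _ = (2:k)⁻¹ • ((2:k) • ∑ p, ∑ q, (U i * Fᵀ) p q • (X p * X q)) := by rw [mul_smul]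
      _ = (2:k)⁻¹ • ((2:k) • g i) := by rw [h2g]
      _ = g i := by rw [← mul_smul, inv_mul_cancel₀ (two_ne_zero), one_smul]
end

section
/- Let n ≥ 1 and m ≥ 1 be integers and let A = (a_{ij}) be a 2 × m matrix whose entries a_{ij} are homogeneous polynomials of degree 1 in k[x₀, …, x_n]. Assume that for every nonzero vector v ∈ k^{n+1} the scalar matrix A(v) = (a_{ij}(v)) ∈ M_{2×m}(k) has rank 2. Then the k-linear span of the m column vectors (a_{1j}, a_{2j}) ∈ S₁ × S₁ (where S₁ is the space of linear forms) has dimension at least n + 2. -/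
open MvPolynomial

lemma aux_single_of_degree_one {σ : Type*} [DecidableEq σ] (d : σ →₀ ℕ) (h : Finsupp.degree d = 1) :
    ∃ i, d = Finsupp.single i 1 := by
  obtain ⟨i, hi⟩ : d.support.Nonempty := by
    rw [Finset.nonempty_iff_ne_empty]
    intro h'
    rw [Finsupp.degree_apply, h'] at h
    simp at h
  have hdi : d i ≠ 0 := Finsupp.mem_support_iff.mp hi
  have hsum : d i + ∑ j ∈ d.support.erase i, d j = 1 := by
    rw [Finset.add_sum_erase _ _ hi]; exact h
  have h0 : ∑ j ∈ d.support.erase i, d j = 0 := by omega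
  refine ⟨i, Finsupp.eq_single_iff.mpr ⟨?_, by omega⟩⟩
  intro j hj
  simp only [Finset.mem_singleton]
  by_contra hne
  have hj' : j ∈ d.support.erase i := Finset.mem_erase.mpr ⟨hne, hj⟩
  have := Finset.sum_eq_zero_iff.mp h0 j hj'
  exact Finsupp.mem_support_iff.mp hj this

lemma aux_eval_of_isHomogeneous_one {N : ℕ} {k : Type*} [CommSemiring k]
    (p : MvPolynomial (Fin N) k) (hp : p.IsHomogeneous 1) (v : Fin N → k) :
    eval v p = ∑ i, coeff (Finsupp.single i 1) p * v i := by
  rw [eval_eq]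
  have hsub : p.support ⊆ Finset.univ.image (fun i : Fin N => Finsupp.single i 1) := by
    intro d hd
    have hdeg : Finsupp.degree d = 1 := by
      have := hp (Finsupp.mem_support_iff.mp hd)
      rwa [Finsupp.degree_eq_weight_one]
    obtain ⟨i, rfl⟩ := aux_single_of_degree_one d hdeg
    exact Finset.mem_image.mpr ⟨i, Finset.mem_univ i, rfl⟩
  rw [Finset.sum_subset hsub (fun d _ hd => by
    rw [notMem_support_iff.mp hd, zero_mul])]
  rw [Finset.sum_image (fun i _ j _ h => Finsupp.single_left_injective one_ne_zero h)]
  refine Finset.sum_congr rfl fun i _ => ?_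
  rw [Finsupp.support_single_ne_zero i one_ne_zero]
  simp

/-- Bilinear pairing: coefficient extraction of one coordinate, paired with a vector. -/
noncomputable def auxColFunc {k : Type*} [Field k] {N : ℕ}
    (W : Submodule k (MvPolynomial (Fin N) k × MvPolynomial (Fin N) k))
    (pr : MvPolynomial (Fin N) k × MvPolynomial (Fin N) k →ₗ[k] MvPolynomial (Fin N) k) :
    (Fin N → k) →ₗ[k] (W →ₗ[k] k) where
  toFun v := ∑ i, v i • ((MvPolynomial.lcoeff k (Finsupp.single i 1)).comp (pr.comp W.subtype))
  map_add' x y := by simp [add_smul, Finset.sum_add_distrib]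
  map_smul' c x := by simp [smul_smul, Finset.smul_sum]

lemma auxColFunc_apply {k : Type*} [Field k] {N : ℕ}
    (W : Submodule k (MvPolynomial (Fin N) k × MvPolynomial (Fin N) k))
    (pr : MvPolynomial (Fin N) k × MvPolynomial (Fin N) k →ₗ[k] MvPolynomial (Fin N) k)
    (v : Fin N → k) (w : W) (hw : (pr w).IsHomogeneous 1) :
    auxColFunc W pr v w = eval v (pr (w : _)) := by
  rw [aux_eval_of_isHomogeneous_one _ hw]
  simp [auxColFunc, MvPolynomial.lcoeff, mul_comm]

/-- If a `2 × m` matrix of linear forms on `ℙⁿ` has rank `2` at every point (i.e. it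
defines an epimorphism `m·O → 2·O(1)`), then the span of its columns in `S₁ × S₁`
has dimension at least `n + 2`. -/
theorem stmt_3 {k : Type*} [Field k] [IsAlgClosed k] [CharZero k]
    (n m : ℕ) (hn : 1 ≤ n) (hm : 1 ≤ m)
    (a : Fin 2 → Fin m → MvPolynomial (Fin (n + 1)) k)
    (ha : ∀ i j, (a i j).IsHomogeneous 1)
    (hrank : ∀ v : Fin (n + 1) → k, v ≠ 0 →
      Matrix.rank (Matrix.of fun i j => eval v (a i j)) = 2) :
    n + 2 ≤ Module.finrank k
      ↥(Submodule.span k (Set.range fun j : Fin m =>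
        ((a 0 j, a 1 j) : MvPolynomial (Fin (n + 1)) k × MvPolynomial (Fin (n + 1)) k))) := by
  set W : Submodule k (MvPolynomial (Fin (n + 1)) k × MvPolynomial (Fin (n + 1)) k) :=
    Submodule.span k (Set.range fun j : Fin m =>
      ((a 0 j, a 1 j) : MvPolynomial (Fin (n + 1)) k × MvPolynomial (Fin (n + 1)) k)) with hW
  haveI : FiniteDimensional k W := FiniteDimensional.span_of_finite k (Set.finite_range _)
  -- all elements of W are (homogeneous deg 1, homogeneous deg 1)
  have hhom : ∀ w : MvPolynomial (Fin (n + 1)) k × MvPolynomial (Fin (n + 1)) k, w ∈ W → w.1.IsHomogeneous 1 ∧ w.2.IsHomogeneous 1 := by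
    intro w hw
    have hle : W ≤ (homogeneousSubmodule (Fin (n + 1)) k 1).prod
        (homogeneousSubmodule (Fin (n + 1)) k 1) := by
      rw [hW, Submodule.span_le]
      rintro _ ⟨j, rfl⟩
      exact ⟨ha 0 j, ha 1 j⟩
    exact hle hw
  set f := auxColFunc W (LinearMap.fst k (MvPolynomial (Fin (n + 1)) k) (MvPolynomial (Fin (n + 1)) k)) with hf
  set g := auxColFunc W (LinearMap.snd k (MvPolynomial (Fin (n + 1)) k) (MvPolynomial (Fin (n + 1)) k)) with hg
  have hfe : ∀ (v : Fin (n + 1) → k) (w : W), f v w = eval v (w : MvPolynomial (Fin (n + 1)) k × MvPolynomial (Fin (n + 1)) k).1 :=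
    fun v w => auxColFunc_apply W _ v w (hhom w w.2).1
  have hge : ∀ (v : Fin (n + 1) → k) (w : W), g v w = eval v (w : MvPolynomial (Fin (n + 1)) k × MvPolynomial (Fin (n + 1)) k).2 :=
    fun v w => auxColFunc_apply W _ v w (hhom w w.2).2
  -- key independence statement
  have key : ∀ v : Fin (n + 1) → k, v ≠ 0 → ∀ α β : k,
      α • f v + β • g v = 0 → α = 0 ∧ β = 0 := by
    intro v hv α β hab
    set M : Matrix (Fin 2) (Fin m) k := Matrix.of fun i j => eval v (a i j) with hM
    have hr : M.rank = 2 := hrank v hv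
    have hsurj : Function.Surjective M.mulVecLin := by
      rw [← LinearMap.range_eq_top]
      apply Submodule.eq_top_of_finrank_eq
      rw [Module.finrank_fin_fun]
      exact hr
    have hcol : ∀ j : Fin m, α * M 0 j + β * M 1 j = 0 := by
      intro j
      have hmem : ((a 0 j, a 1 j) : MvPolynomial (Fin (n + 1)) k × MvPolynomial (Fin (n + 1)) k) ∈ W :=
        Submodule.subset_span ⟨j, rfl⟩
      have := congrFun (congrArg DFunLike.coe hab) ⟨(a 0 j, a 1 j), hmem⟩
      simpa [hfe, hge, hM] using this
    have hrow : ∀ u : Fin m → k, α * M.mulVecLin u 0 + β * M.mulVecLin u 1 = 0 := by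
      intro u
      simp only [Matrix.mulVecLin_apply, Matrix.mulVec, dotProduct, Finset.mul_sum]
      rw [← Finset.sum_add_distrib]
      apply Finset.sum_eq_zero
      intro j _
      linear_combination u j * hcol j
    constructor
    · obtain ⟨u, hu⟩ := hsurj (Pi.single 0 1)
      have := hrow u
      rw [hu] at this
      simpa using this
    · obtain ⟨u, hu⟩ := hsurj (Pi.single 1 1)
      have := hrow u
      rw [hu] at this
      simpa using this
  -- f is injective
  have hfinj : Function.Injective f := by
    rw [← LinearMap.ker_eq_bot, LinearMap.ker_eq_bot']
    intro v hv0
    by_contra hne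
    exact one_ne_zero (key v hne 1 0 (by simpa using hv0)).1
  by_contra hcon
  push_neg at hcon
  have hd : Module.finrank k W ≤ n + 1 := by omega
  have hle : n + 1 ≤ Module.finrank k (W →ₗ[k] k) := by
    have := LinearMap.finrank_le_finrank_of_injective hfinj
    rwa [Module.finrank_fin_fun] at this
  have heq2 : Module.finrank k (W →ₗ[k] k) = Module.finrank k W :=
    Subspace.dual_finrank_eq
  rw [heq2] at hle
  have heq : Module.finrank k (Fin (n + 1) → k) = Module.finrank k (W →ₗ[k] k) := by
    rw [Module.finrank_fin_fun, heq2]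
    omega
  have hfsurj : Function.Surjective f :=
    (LinearMap.injective_iff_surjective_of_finrank_eq_finrank heq).mp hfinj
  let e : (Fin (n + 1) → k) ≃ₗ[k] (W →ₗ[k] k) := LinearEquiv.ofBijective f ⟨hfinj, hfsurj⟩
  let h : Module.End k (Fin (n + 1) → k) := e.symm.toLinearMap ∘ₗ g
  obtain ⟨μ, hμ⟩ := Module.End.exists_eigenvalue h
  obtain ⟨v, hv⟩ := hμ.exists_hasEigenvector
  have hgv : g v = μ • f v := by
    have h1 : h v = μ • v := hv.apply_eq_smul
    have h2 : e (h v) = g v := by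
      simp [h, LinearEquiv.apply_symm_apply]
    rw [← h2, h1, map_smul]
    rfl
  have := key v hv.right μ (-1) (by rw [hgv]; module)
  exact one_ne_zero (neg_eq_zero.mp this.2)
end

section
/- Let V₁, V₂, V₃ ⊆ k⁴ be 2-dimensional linear subspaces with V_i ∩ V_j = {0} for i ≠ j, and let w₀, w₁, w₂, w₃ ∈ k⁴ be nonzero vectors that span k⁴. Assume that for each l ∈ {1,2,3}, the only homogeneous polynomial of degree 2 vanishing on both subspaces V_p with p ≠ l and at all four vectors w₀, …, w₃ is the zero polynomial. Then the k-vector space of homogeneous polynomials of degree 3 vanishing on V₁ ∪ V₂ ∪ V₃ and at all four vectors w₀, …, w₃ has dimension exactly 4 (i.e., h⁰(I_{Y∪W}(3)) = 4). -/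
set_option maxHeartbeats 1000000
set_option synthInstance.maxHeartbeats 100000

open MvPolynomial

section Helpers
open Polynomial
variable {k : Type*} [Field k]



/-- evaluation as a linear map -/
noncomputable def evalLM {n : ℕ} (v : Fin n → k) : MvPolynomial (Fin n) k →ₗ[k] k where
  toFun f := eval v f
  map_add' f g := by simp
  map_smul' c f := by simp [MvPolynomial.smul_eval]

lemma eval_smul_pow {n : ℕ} {m : ℕ} {f : MvPolynomial (Fin m) k} (hf : f.IsHomogeneous n)
    (s : k) (x : Fin m → k) : eval (s • x) f = s ^ n * eval x f := by
  rw [eval_eq, eval_eq, Finset.mul_sum]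
  refine Finset.sum_congr rfl fun d hd => ?_
  have hdeg : ∑ i ∈ d.support, d i = n := by
    have := hf (mem_support_iff.1 hd)
    simpa [Finsupp.weight_apply, Finsupp.sum] using this
  calc coeff d f * ∏ i ∈ d.support, (s • x) i ^ d i
      = coeff d f * ∏ i ∈ d.support, (s ^ d i * x i ^ d i) := by
        simp [Pi.smul_apply, smul_eq_mul, mul_pow]
    _ = coeff d f * ((∏ i ∈ d.support, s ^ d i) * ∏ i ∈ d.support, x i ^ d i) := by
        rw [Finset.prod_mul_distrib]
    _ = s ^ n * (coeff d f * ∏ i ∈ d.support, x i ^ d i) := by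
        rw [Finset.prod_pow_eq_pow_sum, hdeg]; ring



lemma natDegree_aeval_le {m n : ℕ} (f : MvPolynomial (Fin m) k) (hf : f.totalDegree ≤ n)
    (sub : Fin m → Polynomial k) (hsub : ∀ i, (sub i).natDegree ≤ 1) :
    ((MvPolynomial.aeval sub f : Polynomial k)).natDegree ≤ n := by
  conv_lhs => rw [f.as_sum]
  rw [map_sum]
  apply Polynomial.natDegree_sum_le_of_forall_le
  intro d hd
  rw [MvPolynomial.aeval_monomial]
  refine le_trans (Polynomial.natDegree_mul_le) ?_
  have h1 : (algebraMap k (Polynomial k) (coeff d f)).natDegree = 0 := by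
    simp [Polynomial.algebraMap_eq]
  rw [h1, zero_add]
  refine le_trans (Polynomial.natDegree_prod_le _ _) ?_
  have step1 : ∑ i ∈ d.support, ((sub i) ^ (d i)).natDegree ≤ ∑ i ∈ d.support, d i := by
    refine Finset.sum_le_sum (fun i _ => ?_)
    refine le_trans (Polynomial.natDegree_pow_le) ?_
    simpa using Nat.mul_le_mul_left (d i) (hsub i)
  exact le_trans step1 (le_trans (MvPolynomial.le_totalDegree hd) hf)


lemma eval_aeval_line {m : ℕ} (f : MvPolynomial (Fin m) k) (u v : Fin m → k) (t : k) :
    Polynomial.eval t (MvPolynomial.aeval (fun j => Polynomial.C (u j) + Polynomial.X * Polynomial.C (v j)) f)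
      = eval (u + t • v) f := by
  have h := congrFun (congrArg (fun (g : MvPolynomial (Fin m) k →ₐ[k] k) => (g : MvPolynomial (Fin m) k → k))
    (MvPolynomial.comp_aeval (fun j => Polynomial.C (u j) + Polynomial.X * Polynomial.C (v j))
      (Polynomial.aeval t : Polynomial k →ₐ[k] k))) f
  simp only [AlgHom.coe_comp, Function.comp_apply] at h
  have h2 : (MvPolynomial.aeval fun i => (Polynomial.aeval t) (Polynomial.C (u i) + Polynomial.X * Polynomial.C (v i)) : MvPolynomial (Fin m) k →ₐ[k] k) f = eval (u + t • v) f := by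
    simp only [map_add, map_mul, Polynomial.aeval_C, Polynomial.aeval_X]
    have : (fun i => algebraMap k k (u i) + t * algebraMap k k (v i)) = (u + t • v) := by
      funext i; simp [Algebra.algebraMap_self]
    rw [this]; rfl
  rw [← h2, ← h]
  exact (congrFun (Polynomial.coe_aeval_eq_eval t) _).symm



noncomputable def divXL {A : Type*} [CommRing A] [Algebra k A] : Polynomial A →ₗ[k] Polynomial A where
  toFun := Polynomial.divX
  map_add' p q := Polynomial.divX_add
  map_smul' c p := by
    ext n
    simp [Polynomial.coeff_divX, Polynomial.coeff_smul]

noncomputable def divD (m : ℕ) : MvPolynomial (Fin (m+1)) k →ₗ[k] MvPolynomial (Fin (m+1)) k :=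
  ((MvPolynomial.finSuccEquiv k m).symm.toLinearMap) ∘ₗ divXL ∘ₗ (MvPolynomial.finSuccEquiv k m).toLinearMap

lemma X_mul_divD [Infinite k] {m : ℕ} (g : MvPolynomial (Fin (m+1)) k)
    (hz : ∀ y : Fin m → k, eval (Fin.cons 0 y) g = 0) :
    X 0 * divD m g = g := by
  set e := MvPolynomial.finSuccEquiv k m
  have hc0 : (e g).coeff 0 = 0 := by
    apply MvPolynomial.funext
    intro y
    have h := hz y
    rw [MvPolynomial.eval_eq_eval_mv_eval'] at h
    simpa [Polynomial.eval_map, Polynomial.eval₂_at_zero] using h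
  have key : Polynomial.X * (e g).divX = e g := by
    have := Polynomial.X_mul_divX_add (e g)
    rwa [hc0, map_zero, add_zero] at this
  have eX : e.symm Polynomial.X = X 0 := by
    rw [← MvPolynomial.finSuccEquiv_X_zero (R := k) (n := m)]
    exact e.symm_apply_apply _
  calc X 0 * divD m g = e.symm Polynomial.X * e.symm ((e g).divX) := by rw [eX]; rfl
    _ = e.symm (Polynomial.X * (e g).divX) := (map_mul _ _ _).symm
    _ = g := by rw [key]; exact e.symm_apply_apply g

lemma isHomogeneous_of_X_mul {m n : ℕ} {g : MvPolynomial (Fin m) k} {i : Fin m}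
    (h : (X i * g).IsHomogeneous (n+1)) : g.IsHomogeneous n := by
  intro d hd
  have hco : MvPolynomial.coeff (Finsupp.single i 1 + d) (X i * g) ≠ 0 := by
    rwa [MvPolynomial.coeff_X_mul]
  have h2 := h hco
  rw [map_add] at h2
  have h3 : (Finsupp.weight 1) (Finsupp.single i 1) = 1 := by
    simp [Finsupp.weight_apply, Finsupp.sum_single_index]
  rw [h3] at h2
  omega



lemma degree_eq_sum_univ {m : ℕ} (d : Fin m →₀ ℕ) : (Finsupp.weight 1) d = ∑ i, d i := by
  rw [Finsupp.weight_apply]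
  simp only [Pi.one_apply, smul_eq_mul, mul_one]
  exact Finsupp.sum_fintype d _ (fun i => rfl)

noncomputable def monFinset (m n : ℕ) (k : Type*) [Field k] : Finset (MvPolynomial (Fin m) k) := by
  classical
  exact (Finset.Nat.antidiagonalTuple m n).image (fun d => monomial (Finsupp.equivFunOnFinite.symm d) (1 : k))

lemma mem_monFinset {m n : ℕ} (d : Fin m →₀ ℕ) (hd : ∑ i, d i = n) :
    monomial d (1 : k) ∈ monFinset m n k := by
  classical
  rw [monFinset]
  simp only [Finset.mem_image]
  refine ⟨Finsupp.equivFunOnFinite d, ?_, by simp⟩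
  rw [Finset.Nat.mem_antidiagonalTuple]
  simpa [Finsupp.equivFunOnFinite] using hd

lemma homog_le_span (m n : ℕ) :
    homogeneousSubmodule (Fin m) k n ≤ Submodule.span k (monFinset m n k : Set (MvPolynomial (Fin m) k)) := by
  intro f hf
  rw [f.as_sum]
  apply Submodule.sum_mem
  intro d hd
  have hdeg : ∑ i, d i = n := by
    rw [← degree_eq_sum_univ]
    exact hf (mem_support_iff.mp hd)
  have hmem := mem_monFinset (k := k) d hdeg
  have : (monomial d) (coeff d f) = (coeff d f) • (monomial d) (1:k) := by
    rw [MvPolynomial.smul_monomial, smul_eq_mul, mul_one]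
  rw [this]
  exact Submodule.smul_mem _ _ (Submodule.subset_span hmem)

instance homogFD (m n : ℕ) : FiniteDimensional k ↥(homogeneousSubmodule (Fin m) k n) := by
  have : FiniteDimensional k ↥(Submodule.span k (monFinset m n k : Set (MvPolynomial (Fin m) k))) :=
    inferInstance
  exact Submodule.finiteDimensional_of_le (homog_le_span m n)

lemma finrank_homog_le (m n : ℕ) :
    Module.finrank k ↥(homogeneousSubmodule (Fin m) k n) ≤ (Finset.Nat.antidiagonalTuple m n).card := by
  classical
  have h1 := Submodule.finrank_mono (homog_le_span (k := k) m n)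
  refine le_trans h1 (le_trans (finrank_span_finset_le_card _) ?_)
  rw [monFinset]
  exact Finset.card_image_le

lemma finrank_homog_ge (m n : ℕ) :
    (Finset.Nat.antidiagonalTuple m n).card ≤ Module.finrank k ↥(homogeneousSubmodule (Fin m) k n) := by
  classical
  set b : {d // d ∈ Finset.Nat.antidiagonalTuple m n} → ↥(homogeneousSubmodule (Fin m) k n) :=
    fun d => ⟨monomial (Finsupp.equivFunOnFinite.symm d.1) (1 : k), by
      rw [mem_homogeneousSubmodule]
      apply isHomogeneous_monomial
      have : (Finsupp.equivFunOnFinite.symm d.1).degree = ∑ i, d.1 i := by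
        rw [Finsupp.degree]
        refine Finset.sum_subset (Finset.subset_univ _) (fun i _ hi => ?_)
        simpa using Finsupp.notMem_support_iff.mp hi
      rw [this]
      exact Finset.Nat.mem_antidiagonalTuple.mp d.2⟩ with hb
  have hli : LinearIndependent k b := by
    apply LinearIndependent.of_comp (homogeneousSubmodule (Fin m) k n).subtype
    have : ((homogeneousSubmodule (Fin m) k n).subtype ∘ b) =
        (basisMonomials (Fin m) k) ∘ (fun d : {d // d ∈ Finset.Nat.antidiagonalTuple m n} =>
          Finsupp.equivFunOnFinite.symm d.1) := by
      funext d; simp [hb, MvPolynomial.coe_basisMonomials]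
    rw [this]
    apply (basisMonomials (Fin m) k).linearIndependent.comp
    intro d1 d2 h
    exact Subtype.ext (by simpa using congrArg Finsupp.equivFunOnFinite h)
  have := hli.fintype_card_le_finrank
  simpa [Fintype.card_coe] using this

lemma lineVanish [CharZero k] {m n : ℕ} {f : MvPolynomial (Fin m) k} (hf : f.IsHomogeneous n)
    (u v : Fin m → k) (hpts : ∀ i : Fin (n+1), eval (u + ((i : ℕ) : k) • v) f = 0) :
    ∀ s t : k, eval (s • u + t • v) f = 0 := by
  have hdeg : f.totalDegree ≤ n := hf.totalDegree_le
  set P := MvPolynomial.aeval (fun j => Polynomial.C (u j) + Polynomial.X * Polynomial.C (v j)) f with hP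
  have hPdeg : P.natDegree ≤ n := natDegree_aeval_le f hdeg _ (fun i => by
    refine le_trans (Polynomial.natDegree_add_le _ _) ?_
    simp only [Polynomial.natDegree_C, max_le_iff]
    refine ⟨Nat.zero_le _, le_trans (Polynomial.natDegree_mul_le) ?_⟩
    simp [Polynomial.natDegree_C, Polynomial.natDegree_X])
  have hP0 : P = 0 := by
    apply Polynomial.eq_zero_of_natDegree_lt_card_of_eval_eq_zero P
      (f := fun i : Fin (n+1) => ((i : ℕ) : k))
    · intro i j hij
      exact Fin.ext (Nat.cast_injective hij)
    · intro i; rw [eval_aeval_line]; exact hpts i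
    · simpa using Nat.lt_succ_of_le hPdeg
  have hline : ∀ t : k, eval (u + t • v) f = 0 := by
    intro t; rw [← eval_aeval_line, ← hP, hP0]; simp
  -- now f(v) = 0
  have hQ : ∀ t : k, eval (v + t • u) f = 0 ∨ t = 0 := by
    intro t
    by_cases ht : t = 0
    · right; exact ht
    · left
      have : v + t • u = t • (u + t⁻¹ • v) := by
        rw [smul_add, smul_smul, mul_inv_cancel₀ ht, one_smul, add_comm]
      rw [this, eval_smul_pow hf, hline, mul_zero]
  have hv : eval v f = 0 := by
    set Q := MvPolynomial.aeval (fun j => Polynomial.C (v j) + Polynomial.X * Polynomial.C (u j)) f with hQdef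
    have hQ0 : Q = 0 := by
      apply Polynomial.eq_zero_of_infinite_isRoot
      apply Set.Infinite.mono (s := {x : k | x ≠ 0})
      · intro t ht
        simp only [Set.mem_setOf_eq, Polynomial.IsRoot.def]
        rw [eval_aeval_line]
        rcases hQ t with h | h
        · exact h
        · exact absurd h ht
      · exact Set.Finite.infinite_compl (Set.finite_singleton (0 : k))
    have := eval_aeval_line f v u 0
    rw [← hQdef, hQ0] at this
    simpa using this.symm
  intro s t
  by_cases hs : s = 0
  · subst hs
    rw [zero_smul, zero_add, eval_smul_pow hf, hv, mul_zero]
  · have : s • u + t • v = s • (u + (t/s) • v) := by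
      rw [smul_add, smul_smul]
      congr 2
      field_simp
    rw [this, eval_smul_pow hf, hline, mul_zero]


lemma eval_aeval_mv {m m' : ℕ} (f : MvPolynomial (Fin m) k)
    (sub : Fin m → MvPolynomial (Fin m') k) (y : Fin m' → k) :
    eval y (MvPolynomial.aeval sub f) = eval (fun i => eval y (sub i)) f := by
  have h := congrFun (congrArg (fun (g : MvPolynomial (Fin m) k →ₐ[k] k) =>
      (g : MvPolynomial (Fin m) k → k))
    (MvPolynomial.comp_aeval sub (MvPolynomial.aeval y : MvPolynomial (Fin m') k →ₐ[k] k))) f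
  simp only [AlgHom.coe_comp, Function.comp_apply] at h
  have h1 : (MvPolynomial.aeval y : MvPolynomial (Fin m') k →ₐ[k] k)
      ((MvPolynomial.aeval sub) f) = eval y (MvPolynomial.aeval sub f) := rfl
  have h2 : (MvPolynomial.aeval (fun i => (MvPolynomial.aeval y : MvPolynomial (Fin m') k →ₐ[k] k) (sub i)) : MvPolynomial (Fin m) k →ₐ[k] k) f
      = eval (fun i => eval y (sub i)) f := rfl
  rw [← h1, h, h2]

noncomputable def evalsLM {m : ℕ} {ι : Type} [Fintype ι] (pts : ι → (Fin m → k)) :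
    MvPolynomial (Fin m) k →ₗ[k] (ι → k) :=
  LinearMap.pi (fun i =>
    { toFun := fun f => eval (pts i) f
      map_add' := fun f g => by simp
      map_smul' := fun c f => by simp [MvPolynomial.smul_eval] })

@[simp] lemma evalsLM_apply {m : ℕ} {ι : Type} [Fintype ι] (pts : ι → (Fin m → k))
    (f : MvPolynomial (Fin m) k) (i : ι) : evalsLM pts f i = eval (pts i) f := rfl

lemma comap_subtype_finrank_eq {M : Type*} [AddCommGroup M] [Module k M]
    (p S : Submodule k M) :
    Module.finrank k ↥(Submodule.comap p.subtype S) = Module.finrank k ↥(p ⊓ S) := by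
  have h1 : Submodule.comap p.subtype S = Submodule.comap p.subtype (p ⊓ S) := by
    rw [Submodule.comap_inf, Submodule.comap_subtype_self, top_inf_eq]
  rw [h1]
  exact (Submodule.comapSubtypeEquivOfLe inf_le_left).finrank_eq

lemma finrank_homog_inf_ker {m n : ℕ} {ι : Type} [Fintype ι] (pts : ι → (Fin m → k)) :
    Module.finrank k ↥(homogeneousSubmodule (Fin m) k n ⊓ LinearMap.ker (evalsLM pts))
      + Module.finrank k ↥(LinearMap.range ((evalsLM pts) ∘ₗ (homogeneousSubmodule (Fin m) k n).subtype))
      = Module.finrank k ↥(homogeneousSubmodule (Fin m) k n) := by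
  have h := LinearMap.finrank_range_add_finrank_ker
    ((evalsLM pts) ∘ₗ (homogeneousSubmodule (Fin m) k n).subtype)
  rw [LinearMap.ker_comp, comap_subtype_finrank_eq] at h
  omega

lemma finrank_homog_le_inf_add {m n : ℕ} {ι : Type} [Fintype ι] (pts : ι → (Fin m → k)) :
    Module.finrank k ↥(homogeneousSubmodule (Fin m) k n)
      ≤ Module.finrank k ↥(homogeneousSubmodule (Fin m) k n ⊓ LinearMap.ker (evalsLM pts))
        + Fintype.card ι := by
  have h := finrank_homog_inf_ker (k := k) (n := n) pts
  have h2 : Module.finrank k ↥(LinearMap.range ((evalsLM pts) ∘ₗ (homogeneousSubmodule (Fin m) k n).subtype))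
      ≤ Fintype.card ι := by
    have := Submodule.finrank_le (LinearMap.range ((evalsLM pts) ∘ₗ (homogeneousSubmodule (Fin m) k n).subtype))
    rwa [Module.finrank_pi] at this
  omega

lemma exists_nonzero_vanishing {m n : ℕ} {ι : Type} [Fintype ι] (pts : ι → (Fin m → k))
    (hcard : Fintype.card ι < (Finset.Nat.antidiagonalTuple m n).card) :
    ∃ f : MvPolynomial (Fin m) k, f.IsHomogeneous n ∧ f ≠ 0 ∧ ∀ i, eval (pts i) f = 0 := by
  have h1 := finrank_homog_le_inf_add (k := k) (n := n) pts
  have h2 := finrank_homog_ge (k := k) m n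
  have hpos : 0 < Module.finrank k ↥(homogeneousSubmodule (Fin m) k n ⊓ LinearMap.ker (evalsLM pts)) := by
    omega
  have hne : (homogeneousSubmodule (Fin m) k n ⊓ LinearMap.ker (evalsLM pts)) ≠ ⊥ := by
    intro hbot
    rw [hbot] at hpos
    simp at hpos
  obtain ⟨f, hf, hf0⟩ := Submodule.exists_mem_ne_zero_of_ne_bot hne
  refine ⟨f, hf.1, hf0, fun i => ?_⟩
  have h5 : evalsLM pts f = 0 := hf.2
  exact congrFun h5 i

lemma vanish_on_line {n m : ℕ} {f : MvPolynomial (Fin m) k} [CharZero k] (hf : f.IsHomogeneous n)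
    (W : Submodule k (Fin m → k)) (bW : Module.Basis (Fin 2) k W)
    (h : ∀ j : Fin (n+1), eval ((bW 0 : Fin m → k) + ((j : ℕ) : k) • (bW 1 : Fin m → k)) f = 0) :
    ∀ x ∈ W, eval x f = 0 := by
  intro x hx
  have hrep := bW.sum_repr ⟨x, hx⟩
  have hx2 : x = (bW.repr ⟨x, hx⟩ 0) • (bW 0 : Fin m → k) + (bW.repr ⟨x, hx⟩ 1) • (bW 1 : Fin m → k) := by
    have h3 : ((∑ i : Fin 2, (bW.repr ⟨x, hx⟩) i • bW i : W) : Fin m → k) = x := congrArg Subtype.val hrep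
    conv_lhs => rw [← h3]
    push_cast
    rw [Fin.sum_univ_two]
  rw [hx2]
  exact lineVanish hf _ _ h _ _

lemma exists_dual_pair {m : ℕ} {x y : Fin m → k} (h : LinearIndependent k ![x, y]) :
    ∃ φ : (Fin m → k) →ₗ[k] k, φ x = 1 ∧ φ y = 0 := by
  classical
  set Qs := Submodule.span k {y}
  have hx : x ∉ Qs := by
    intro hmem
    rw [Submodule.mem_span_singleton] at hmem
    obtain ⟨α, hα⟩ := hmem
    have := (linearIndependent_fin2.mp h).2 α
    simp at this
    exact this (by simpa using hα)
  have hπx : Qs.mkQ x ≠ 0 := by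
    rw [Submodule.mkQ_apply, Ne, Submodule.Quotient.mk_eq_zero]
    exact hx
  obtain ⟨ψ, hψ⟩ : ∃ ψ : Module.Dual k ((Fin m → k) ⧸ Qs), ψ (Qs.mkQ x) ≠ 0 := by
    by_contra hall
    push_neg at hall
    exact hπx ((Module.forall_dual_apply_eq_zero_iff k _).mp hall)
  refine ⟨(ψ (Qs.mkQ x))⁻¹ • (ψ ∘ₗ Qs.mkQ), ?_, ?_⟩
  · simp only [LinearMap.smul_apply, LinearMap.coe_comp, Function.comp_apply, smul_eq_mul]
    exact inv_mul_cancel₀ hψ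
  · have : Qs.mkQ y = 0 := by
      rw [Submodule.mkQ_apply, Submodule.Quotient.mk_eq_zero]
      exact Submodule.mem_span_singleton_self y
    simp [this]

lemma functional_poly {m : ℕ} (φ : (Fin m → k) →ₗ[k] k) :
    ∃ L : MvPolynomial (Fin m) k, L.IsHomogeneous 1 ∧ ∀ x, eval x L = φ x := by
  refine ⟨∑ i, MvPolynomial.C (φ (Pi.single i 1)) * MvPolynomial.X i, ?_, ?_⟩
  · exact IsHomogeneous.sum _ _ _ (fun i _ => isHomogeneous_C_mul_X _ i)
  · intro x
    rw [map_sum]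
    have hx : x = ∑ i, x i • (Pi.single i (1 : k) : Fin m → k) := by
      conv_lhs => rw [pi_eq_sum_univ x]
      refine Finset.sum_congr rfl (fun i _ => ?_)
      congr 1
      funext j
      simp [Pi.single_apply, eq_comm]
    calc ∑ i, MvPolynomial.eval x (MvPolynomial.C (φ (Pi.single i 1)) * MvPolynomial.X i)
        = ∑ i, φ (Pi.single i 1) * x i := by simp
      _ = φ x := by
          conv_rhs => rw [hx]
          rw [map_sum]
          refine Finset.sum_congr rfl (fun i _ => ?_)
          rw [map_smul]
          simp [mul_comm]


end Helpers


/-- The submodule of polynomials vanishing at every point of a subset `T ⊆ k⁴`. -/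
def vanishingSubmodule {k : Type*} [Field k] (T : Set (Fin 4 → k)) :
    Submodule k (MvPolynomial (Fin 4) k) where
  carrier := {f | ∀ v ∈ T, MvPolynomial.eval v f = 0}
  zero_mem' := fun v _ => by simp
  add_mem' := fun {f g} hf hg v hv => by simp [hf v hv, hg v hv]
  smul_mem' := fun c f hf v hv => by simp [MvPolynomial.smul_eval, hf v hv]

lemma mem_vanishing {k : Type*} [Field k] {T : Set (Fin 4 → k)} {f : MvPolynomial (Fin 4) k} :
    f ∈ vanishingSubmodule T ↔ ∀ v ∈ T, MvPolynomial.eval v f = 0 := Iff.rfl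

/-- `h⁰(I_{Y∪W}(3)) = 4`, where `Y` is the union of three mutually disjoint lines
and `W` consists of four points spanning `ℙ³` imposing independent conditions on
quadrics through two of the lines. -/
theorem stmt_5 {k : Type*} [Field k] [IsAlgClosed k] [CharZero k]
    (V : Fin 3 → Submodule k (Fin 4 → k))
    (hVdim : ∀ p, Module.finrank k (V p) = 2)
    (hVdisj : ∀ p q : Fin 3, p ≠ q → V p ⊓ V q = ⊥)
    (w : Fin 4 → (Fin 4 → k))
    (hw0 : ∀ i, w i ≠ 0)
    (hwspan : Submodule.span k (Set.range w) = ⊤)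
    (hres : ∀ l : Fin 3, ∀ q : MvPolynomial (Fin 4) k, q.IsHomogeneous 2 →
      (∀ p : Fin 3, p ≠ l → ∀ v ∈ V p, eval v q = 0) →
      (∀ i, eval (w i) q = 0) → q = 0) :
    Module.finrank k
      ↥(homogeneousSubmodule (Fin 4) k 3 ⊓
        vanishingSubmodule ((⋃ p, (V p : Set (Fin 4 → k))) ∪ Set.range w)) = 4 := by
  classical
  haveI : Infinite k := Infinite.of_injective (Nat.cast : ℕ → k) Nat.cast_injective
  -- bases of the lines
  set bp : (p : Fin 3) → Module.Basis (Fin 2) k ↥(V p) :=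
    fun p => Module.finBasisOfFinrankEq k ↥(V p) (hVdim p) with hbp
  set U : Fin 3 → (Fin 4 → k) := fun p => ((bp p) 0 : Fin 4 → k) with hU
  set Vv : Fin 3 → (Fin 4 → k) := fun p => ((bp p) 1 : Fin 4 → k) with hVv
  have hUmem : ∀ p, U p ∈ V p := fun p => ((bp p) 0).2
  have hVvmem : ∀ p, Vv p ∈ V p := fun p => ((bp p) 1).2
  -- step A : the points avoid the lines
  have hwV : ∀ i p, w i ∉ V p := by
    intro i p hmem
    obtain ⟨l, hlp⟩ : ∃ l : Fin 3, p ≠ l := by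
      by_cases hp : p = 0
      · exact ⟨1, by simp [hp]⟩
      · exact ⟨0, hp⟩
    set pts : ((Fin 2 × Fin 3) ⊕ Fin 3) → (Fin 4 → k) :=
      Sum.elim (fun az => U (l.succAbove az.1) + ((az.2 : ℕ) : k) • Vv (l.succAbove az.1))
        (fun j => w (i.succAbove j)) with hpts
    have hcard : Fintype.card ((Fin 2 × Fin 3) ⊕ Fin 3) < (Finset.Nat.antidiagonalTuple 4 2).card := by
      rw [show (Finset.Nat.antidiagonalTuple 4 2).card = 10 from rfl]
      simp
    obtain ⟨q, hq2, hq0, hqv⟩ := exists_nonzero_vanishing pts hcard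
    have hlines : ∀ p', p' ≠ l → ∀ v ∈ V p', eval v q = 0 := by
      intro p' hp'
      obtain ⟨z, hz⟩ := Fin.exists_succAbove_eq hp'
      apply vanish_on_line hq2 (V p') (bp p')
      intro j
      have := hqv (.inl (z, j))
      rw [hpts] at this
      simpa [hz] using this
    have hw' : ∀ j, eval (w j) q = 0 := by
      intro j
      by_cases hj : j = i
      · subst hj
        exact hlines p hlp _ hmem
      · obtain ⟨z, hz⟩ := Fin.exists_succAbove_eq hj
        have := hqv (.inr z)
        rw [hpts] at this
        simpa [hz] using this
    exact hq0 (hres l q hq2 hlines hw')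
  -- the 16 points
  set pts16 : ((Fin 3 × Fin 4) ⊕ Fin 4) → (Fin 4 → k) :=
    Sum.elim (fun pj => U pj.1 + ((pj.2 : ℕ) : k) • Vv pj.1) w with hpts16
  -- membership characterization
  have hKmem : ∀ f : MvPolynomial (Fin 4) k,
      f ∈ vanishingSubmodule ((⋃ p, (V p : Set (Fin 4 → k))) ∪ Set.range w) ↔
        (∀ p, ∀ v ∈ V p, eval v f = 0) ∧ (∀ i, eval (w i) f = 0) := by
    intro f
    rw [mem_vanishing]
    constructor
    · intro h
      constructor
      · intro p v hv
        exact h v (Or.inl (Set.mem_iUnion.mpr ⟨p, hv⟩))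
      · intro i
        exact h (w i) (Or.inr ⟨i, rfl⟩)
    · rintro ⟨h1, h2⟩ v hv
      rcases hv with hv | hv
      · obtain ⟨p, hp⟩ := Set.mem_iUnion.mp hv
        exact h1 p v hp
      · obtain ⟨i, rfl⟩ := hv
        exact h2 i
  -- kernel characterization
  have hKeq : homogeneousSubmodule (Fin 4) k 3 ⊓
      vanishingSubmodule ((⋃ p, (V p : Set (Fin 4 → k))) ∪ Set.range w)
      = homogeneousSubmodule (Fin 4) k 3 ⊓ LinearMap.ker (evalsLM pts16) := by
    ext f
    simp only [Submodule.mem_inf, LinearMap.mem_ker]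
    rw [hKmem f]
    constructor
    · rintro ⟨hf3, hvan, hw'⟩
      refine ⟨hf3, ?_⟩
      funext z
      rcases z with ⟨p, j⟩ | i
      · have : U p + ((j : ℕ) : k) • Vv p ∈ V p :=
          (V p).add_mem (hUmem p) ((V p).smul_mem _ (hVvmem p))
        simpa [hpts16] using hvan p _ this
      · simpa [hpts16] using hw' i
    · rintro ⟨hf3, hker⟩
      refine ⟨hf3, ?_, ?_⟩
      · intro p v hv
        apply vanish_on_line hf3 (V p) (bp p) _ v hv
        intro j
        have := congrFun hker (.inl (p, j))
        simpa [hpts16] using this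
      · intro i
        have := congrFun hker (.inr i)
        simpa [hpts16] using this
  -- lower bound
  have hlow : 4 ≤ Module.finrank k
      ↥(homogeneousSubmodule (Fin 4) k 3 ⊓
        vanishingSubmodule ((⋃ p, (V p : Set (Fin 4 → k))) ∪ Set.range w)) := by
    rw [hKeq]
    have h1 := finrank_homog_le_inf_add (k := k) (n := 3) pts16
    have h2 := finrank_homog_ge (k := k) 4 3
    rw [show (Finset.Nat.antidiagonalTuple 4 3).card = 20 from rfl] at h2
    have h3 : Fintype.card ((Fin 3 × Fin 4) ⊕ Fin 4) = 16 := by simp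
    omega
  have hup : Module.finrank k
      ↥(homogeneousSubmodule (Fin 4) k 3 ⊓
        vanishingSubmodule ((⋃ p, (V p : Set (Fin 4 → k))) ∪ Set.range w)) ≤ 4 := by
    -- a functional vanishing on V 0 but at no w i
    obtain ⟨hfun, hfunV0, hfunw⟩ : ∃ hfun : (Fin 4 → k) →ₗ[k] k,
        (∀ x ∈ V 0, hfun x = 0) ∧ (∀ i, hfun (w i) ≠ 0) := by
      have hQdim : Module.finrank k ((Fin 4 → k) ⧸ V 0) = 2 := by
        have h1 := Submodule.finrank_quotient_add_finrank (V 0)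
        rw [hVdim 0] at h1
        have h2 : Module.finrank k (Fin 4 → k) = 4 := by simp [Module.finrank_pi]
        omega
      set bQ : Module.Basis (Fin 2) k ((Fin 4 → k) ⧸ V 0) := Module.finBasisOfFinrankEq k _ hQdim with hbQ
      set ph : Fin 2 → ((Fin 4 → k) →ₗ[k] k) := fun j => (bQ.coord j) ∘ₗ (V 0).mkQ with hph
      have hphV0 : ∀ j, ∀ x ∈ V 0, ph j x = 0 := by
        intro j x hx
        have : (V 0).mkQ x = 0 := by
          rw [Submodule.mkQ_apply, Submodule.Quotient.mk_eq_zero]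
          exact hx
        simp [hph, this]
      have hphw : ∀ i, ¬ (ph 0 (w i) = 0 ∧ ph 1 (w i) = 0) := by
        rintro i ⟨h0, h1⟩
        have hq0 : (V 0).mkQ (w i) = 0 := by
          have := bQ.sum_repr ((V 0).mkQ (w i))
          rw [Fin.sum_univ_two] at this
          have e0 : bQ.repr ((V 0).mkQ (w i)) 0 = 0 := h0
          have e1 : bQ.repr ((V 0).mkQ (w i)) 1 = 0 := h1
          rw [e0, e1, zero_smul, zero_smul, add_zero] at this
          exact this.symm
        rw [Submodule.mkQ_apply, Submodule.Quotient.mk_eq_zero] at hq0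
        exact hwV i 0 hq0
      -- pigeonhole over 5 candidate values of t
      obtain ⟨t, ht⟩ : ∃ t : k, ∀ i, ph 0 (w i) + t * ph 1 (w i) ≠ 0 := by
        by_contra hall
        push_neg at hall
        have hch : ∀ j : Fin 5, ∃ i : Fin 4, ph 0 (w i) + ((j : ℕ) : k) * ph 1 (w i) = 0 :=
          fun j => hall _
        choose F hF using hch
        obtain ⟨j1, -, j2, -, hne, hFeq⟩ :=
          Finset.exists_ne_map_eq_of_card_lt_of_maps_to
            (s := (Finset.univ : Finset (Fin 5))) (t := (Finset.univ : Finset (Fin 4)))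
            (by simp) (fun j _ => Finset.mem_univ (F j))
        have h1 := hF j1
        have h2 := hF j2
        rw [← hFeq] at h2
        set i := F j1
        have hsub : (((j1 : ℕ) : k) - ((j2 : ℕ) : k)) * ph 1 (w i) = 0 := by
          have := sub_eq_zero.mpr (h1.trans h2.symm)
          ring_nf at this ⊢
          linear_combination this
        have hj12 : ((j1 : ℕ) : k) - ((j2 : ℕ) : k) ≠ 0 := by
          rw [sub_ne_zero]
          exact fun hc => hne (Fin.ext (Nat.cast_injective hc))
        have hph1 : ph 1 (w i) = 0 := by
          rcases mul_eq_zero.mp hsub with h | h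
          · exact absurd h hj12
          · exact h
        have hph0 : ph 0 (w i) = 0 := by
          have := h1
          rw [hph1, mul_zero, add_zero] at this
          exact this
        exact hphw i ⟨hph0, hph1⟩
      refine ⟨ph 0 + t • ph 1, ?_, ?_⟩
      · intro x hx
        simp [hphV0 0 x hx, hphV0 1 x hx]
      · intro i
        simpa using ht i
    set a : Fin 4 → k := U 0 with ha
    set b : Fin 4 → k := Vv 0 with hb
    have hamem : a ∈ V 0 := hUmem 0
    have hbmem : b ∈ V 0 := hVvmem 0
    -- ![a,b] is linearly independent
    have hab : LinearIndependent k ![a, b] := by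
      have h1 : LinearIndependent k (fun j : Fin 2 => ((bp 0) j : Fin 4 → k)) :=
        (bp 0).linearIndependent.map' (V 0).subtype (Submodule.ker_subtype _)
      have h2 : (fun j : Fin 2 => ((bp 0) j : Fin 4 → k)) = ![a, b] := by
        funext j
        fin_cases j <;> rfl
      rwa [h2] at h1
    have hspanab : Submodule.span k (Set.range ![a, b]) ≤ V 0 := by
      rw [Submodule.span_le]
      rintro x ⟨j, rfl⟩
      fin_cases j
      · exact hamem
      · exact hbmem
    -- choose c in ker hfun, not in V 0
    have hfunrange : LinearMap.range hfun = ⊤ := by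
      rw [LinearMap.range_eq_top]
      intro z
      refine ⟨(z * (hfun (w 0))⁻¹) • w 0, ?_⟩
      rw [map_smul, smul_eq_mul]
      field_simp [hfunw 0]
    have hkerdim : Module.finrank k ↥(LinearMap.ker hfun) = 3 := by
      have h1 := LinearMap.finrank_range_add_finrank_ker hfun
      rw [hfunrange] at h1
      have h2 : Module.finrank k (Fin 4 → k) = 4 := by simp [Module.finrank_pi]
      have h3 : Module.finrank k ↥(⊤ : Submodule k k) = 1 := by
        rw [finrank_top, Module.finrank_self]
      omega
    have hV0ker : V 0 ≤ LinearMap.ker hfun := by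
      intro x hx
      rw [LinearMap.mem_ker]
      exact hfunV0 x hx
    obtain ⟨c, hcker, hcV0⟩ : ∃ c, c ∈ LinearMap.ker hfun ∧ c ∉ V 0 := by
      have hlt : V 0 < LinearMap.ker hfun := by
        refine lt_of_le_of_ne hV0ker (fun heq => ?_)
        rw [← heq] at hkerdim
        rw [hVdim 0] at hkerdim
        omega
      obtain ⟨c, hc1, hc2⟩ := SetLike.exists_of_lt hlt
      exact ⟨c, hc1, hc2⟩
    -- ![a,b,c] linearly independent
    have habc : LinearIndependent k ![a, b, c] := by
      have hsnoc : ![a, b, c] = Fin.snoc ![a, b] c := by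
        funext j
        fin_cases j <;> simp [Fin.snoc] <;> rfl
      rw [hsnoc, linearIndependent_fin_snoc]
      exact ⟨hab, fun hc => hcV0 (hspanab hc)⟩
    have hspanabc_ker : Submodule.span k (Set.range ![a, b, c]) ≤ LinearMap.ker hfun := by
      rw [Submodule.span_le]
      rintro x ⟨j, rfl⟩
      fin_cases j
      · exact hV0ker hamem
      · exact hV0ker hbmem
      · exact hcker
    have hspanabc_rank : Module.finrank k ↥(Submodule.span k (Set.range ![a, b, c])) = 3 := by
      rw [finrank_span_eq_card habc]
      simp
    have hspan_eq_ker : Submodule.span k (Set.range ![a, b, c]) = LinearMap.ker hfun := by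
      apply Submodule.eq_of_le_of_finrank_le hspanabc_ker
      rw [hspanabc_rank, hkerdim]
    -- choose d outside the span
    obtain ⟨d, hd⟩ : ∃ d, d ∉ Submodule.span k (Set.range ![a, b, c]) := by
      have hne : Submodule.span k (Set.range ![a, b, c]) ≠ ⊤ := by
        intro htop
        rw [htop] at hspanabc_rank
        have : Module.finrank k ↥(⊤ : Submodule k (Fin 4 → k)) = 4 := by
          rw [finrank_top]; simp [Module.finrank_pi]
        omega
      have hlt : Submodule.span k (Set.range ![a, b, c]) < (⊤ : Submodule k (Fin 4 → k)) :=
        lt_of_le_of_ne le_top hne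
      obtain ⟨d, -, hd⟩ := SetLike.exists_of_lt hlt
      exact ⟨d, hd⟩
    have habcd : LinearIndependent k ![d, a, b, c] := by
      rw [show ![d, a, b, c] = Fin.cons d ![a, b, c] from rfl, linearIndependent_fin_cons]
      exact ⟨habc, hd⟩
    set B4 : Module.Basis (Fin 4) k (Fin 4 → k) :=
      basisOfLinearIndependentOfCardEqFinrank habcd (by simp [Module.finrank_pi]) with hB4def
    have hB4 : ∀ j, B4 j = ![d, a, b, c] j :=
      fun j => congrFun (coe_basisOfLinearIndependentOfCardEqFinrank habcd _) j
    -- representation in the basis B4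
    have hrep4 : ∀ x : Fin 4 → k,
        x = B4.repr x 0 • d + B4.repr x 1 • a + B4.repr x 2 • b + B4.repr x 3 • c := by
      intro x
      have h1 := B4.sum_repr x
      rw [Fin.sum_univ_four, hB4 0, hB4 1, hB4 2, hB4 3] at h1
      simp only [Matrix.cons_val_zero, Matrix.cons_val_one, Matrix.head_cons] at h1
      exact h1.symm
    have hcoord0span : ∀ x : Fin 4 → k, B4.repr x 0 = 0 →
        x ∈ Submodule.span k (Set.range ![a, b, c]) := by
      intro x hx0
      have h1 := hrep4 x
      rw [hx0, zero_smul, zero_add] at h1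
      rw [h1]
      have hma : a ∈ Set.range ![a, b, c] := ⟨0, rfl⟩
      have hmb : b ∈ Set.range ![a, b, c] := ⟨1, rfl⟩
      have hmc : c ∈ Set.range ![a, b, c] := ⟨2, rfl⟩
      exact Submodule.add_mem _ (Submodule.add_mem _
        (Submodule.smul_mem _ _ (Submodule.subset_span hma))
        (Submodule.smul_mem _ _ (Submodule.subset_span hmb)))
        (Submodule.smul_mem _ _ (Submodule.subset_span hmc))
    have hwcoord : ∀ i, B4.repr (w i) 0 ≠ 0 := by
      intro i h0
      have := hspanabc_ker (hcoord0span (w i) h0)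
      rw [LinearMap.mem_ker] at this
      exact hfunw i this
    -- the substitution onto the plane spanned by c, a, b
    set sub3 : Fin 4 → MvPolynomial (Fin 3) k :=
      fun i => MvPolynomial.C (c i) * MvPolynomial.X 0 + MvPolynomial.C (a i) * MvPolynomial.X 1
        + MvPolynomial.C (b i) * MvPolynomial.X 2 with hsub3
    have hsub3hom : ∀ i, (sub3 i).IsHomogeneous 1 := by
      intro i
      exact ((isHomogeneous_C_mul_X _ _).add (isHomogeneous_C_mul_X _ _)).add
        (isHomogeneous_C_mul_X _ _)
    have hρ3eval : ∀ (f : MvPolynomial (Fin 4) k) (y : Fin 3 → k),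
        eval y (MvPolynomial.aeval sub3 f) = eval (y 0 • c + y 1 • a + y 2 • b) f := by
      intro f y
      rw [eval_aeval_mv]
      have hv : (fun i => eval y (sub3 i)) = (y 0 • c + y 1 • a + y 2 • b) := by
        funext i
        simp [hsub3]
        ring
      rw [hv]
    -- division identity for members of K
    have hXdiv : ∀ f : MvPolynomial (Fin 4) k, (∀ v ∈ V 0, eval v f = 0) →
        MvPolynomial.X 0 * divD 2 (MvPolynomial.aeval sub3 f) = MvPolynomial.aeval sub3 f := by
      intro f hvan
      apply X_mul_divD
      intro y
      rw [hρ3eval]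
      have hv : (Fin.cons (0:k) y : Fin 3 → k) 0 • c + (Fin.cons (0:k) y : Fin 3 → k) 1 • a
          + (Fin.cons (0:k) y : Fin 3 → k) 2 • b = y 0 • a + y 1 • b := by
        rw [show ((1 : Fin 3) = Fin.succ 0) from rfl, show ((2 : Fin 3) = Fin.succ 1) from rfl]
        rw [Fin.cons_zero, Fin.cons_succ, Fin.cons_succ]
        rw [zero_smul, zero_add]
      rw [hv]
      exact hvan _ ((V 0).add_mem ((V 0).smul_mem _ hamem) ((V 0).smul_mem _ hbmem))
    -- points z1 z2 on the lines V 1 and V 2 inside the plane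
    have hzex : ∀ pp : Fin 3, ∃ z : Fin 4 → k, z ∈ V pp ∧ z ≠ 0 ∧ hfun z = 0 := by
      intro pp
      have h1 := Submodule.finrank_sup_add_finrank_inf_eq (V pp) (LinearMap.ker hfun)
      rw [hVdim pp, hkerdim] at h1
      have h2 : Module.finrank k ↥(V pp ⊔ LinearMap.ker hfun) ≤ 4 := by
        have := Submodule.finrank_le (V pp ⊔ LinearMap.ker hfun)
        simpa [Module.finrank_pi] using this
      have h3 : (V pp ⊓ LinearMap.ker hfun) ≠ ⊥ := by
        intro hbot
        rw [hbot, finrank_bot] at h1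
        omega
      obtain ⟨z, hzmem, hzne⟩ := Submodule.exists_mem_ne_zero_of_ne_bot h3
      exact ⟨z, hzmem.1, hzne, hzmem.2⟩
    have hcoords : ∀ z : Fin 4 → k, hfun z = 0 → ∃ p : Fin 3 → k,
        p 0 • c + p 1 • a + p 2 • b = z := by
      intro z hzf
      have hmem : z ∈ Submodule.span k (Set.range ![a, b, c]) := by
        rw [hspan_eq_ker]
        exact hzf
      rw [Submodule.mem_span_range_iff_exists_fun] at hmem
      obtain ⟨q, hq⟩ := hmem
      rw [Fin.sum_univ_three] at hq
      refine ⟨![q 2, q 0, q 1], ?_⟩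
      simp only [Matrix.cons_val_zero, Matrix.cons_val_one, Matrix.head_cons,
        Matrix.cons_val_two, Matrix.tail_cons] at hq ⊢
      rw [← hq]
      abel
    have hp0ne : ∀ (pp : Fin 3), pp ≠ 0 → ∀ z, z ∈ V pp → z ≠ 0 → ∀ p : Fin 3 → k,
        p 0 • c + p 1 • a + p 2 • b = z → p 0 ≠ 0 := by
      intro pp hpp z hzV hzne p hp h0
      rw [h0, zero_smul, zero_add] at hp
      have hzV0 : z ∈ V 0 := by
        rw [← hp]
        exact (V 0).add_mem ((V 0).smul_mem _ hamem) ((V 0).smul_mem _ hbmem)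
      have : z ∈ V pp ⊓ V 0 := ⟨hzV, hzV0⟩
      rw [hVdisj pp 0 hpp] at this
      exact hzne this
    obtain ⟨z1, hz1V, hz1ne, hz1f⟩ := hzex 1
    obtain ⟨z2, hz2V, hz2ne, hz2f⟩ := hzex 2
    obtain ⟨p1, hp1⟩ := hcoords z1 hz1f
    obtain ⟨p2, hp2⟩ := hcoords z2 hz2f
    have hp10 : p1 0 ≠ 0 := hp0ne 1 (by decide) z1 hz1V hz1ne p1 hp1
    have hp20 : p2 0 ≠ 0 := hp0ne 2 (by decide) z2 hz2V hz2ne p2 hp2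
    set pts2 : Fin 2 → (Fin 3 → k) := ![p1, p2] with hpts2
    set T := homogeneousSubmodule (Fin 3) k 2 ⊓ LinearMap.ker (evalsLM pts2) with hT
    set Θ0 : MvPolynomial (Fin 4) k →ₗ[k] MvPolynomial (Fin 3) k :=
      divD 2 ∘ₗ (MvPolynomial.aeval sub3).toLinearMap with hΘ0
    have hΘ0apply : ∀ f, Θ0 f = divD 2 (MvPolynomial.aeval sub3 f) := fun f => rfl
    -- characterize membership in K
    set Km := homogeneousSubmodule (Fin 4) k 3 ⊓
        vanishingSubmodule ((⋃ p, (V p : Set (Fin 4 → k))) ∪ Set.range w) with hKm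
    have hKchar : ∀ f : MvPolynomial (Fin 4) k, f ∈ Km ↔
        (f.IsHomogeneous 3 ∧ (∀ p, ∀ v ∈ V p, eval v f = 0) ∧ (∀ i, eval (w i) f = 0)) := by
      intro f
      rw [hKm, Submodule.mem_inf, hKmem f, mem_homogeneousSubmodule]
    -- Θ0 maps K into T
    have hmemT : ∀ f, f ∈ Km → Θ0 f ∈ T := by
      intro f hf
      rw [hKchar] at hf
      obtain ⟨hf3, hfV, hfw⟩ := hf
      have hρf := hXdiv f (hfV 0)
      rw [← hΘ0apply] at hρf
      rw [hT, Submodule.mem_inf]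
      constructor
      · rw [mem_homogeneousSubmodule]
        apply isHomogeneous_of_X_mul (i := (0 : Fin 3)) (n := 2)
        rw [hρf]
        have := hf3.aeval sub3 hsub3hom
        simpa using this
      · rw [LinearMap.mem_ker]
        funext j
        rw [evalsLM_apply]
        have hz : ∀ (p : Fin 3 → k) (z : Fin 4 → k), p 0 • c + p 1 • a + p 2 • b = z →
            p 0 ≠ 0 → eval z f = 0 → eval p (Θ0 f) = 0 := by
          intro p z hpz hp0 hzf
          have h1 := congrArg (eval p) hρf
          rw [map_mul, eval_X, hρ3eval, hpz, hzf] at h1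
          rcases mul_eq_zero.mp h1 with h | h
          · exact absurd h hp0
          · exact h
        fin_cases j
        · exact hz p1 z1 hp1 hp10 (hfV 1 z1 hz1V)
        · exact hz p2 z2 hp2 hp20 (hfV 2 z2 hz2V)
    -- line representation helper
    have hlinerep : ∀ (pp : Fin 3) (x : Fin 4 → k), x ∈ V pp →
        ∃ r s : k, x = r • U pp + s • Vv pp := by
      intro pp x hx
      refine ⟨(bp pp).repr ⟨x, hx⟩ 0, (bp pp).repr ⟨x, hx⟩ 1, ?_⟩
      have hrep := (bp pp).sum_repr ⟨x, hx⟩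
      have h3 : ((∑ i : Fin 2, ((bp pp).repr ⟨x, hx⟩) i • (bp pp) i : V pp) : Fin 4 → k) = x :=
        congrArg Subtype.val hrep
      conv_lhs => rw [← h3]
      push_cast
      rw [Fin.sum_univ_two]
    -- injectivity of Θ0 on K
    have hΘinj : ∀ f, f ∈ Km → Θ0 f = 0 → f = 0 := by
      intro f hf hΘ
      rw [hKchar] at hf
      obtain ⟨hf3, hfV, hfw⟩ := hf
      have hρf := hXdiv f (hfV 0)
      rw [hΘ0apply] at hΘ
      have hρ0 : MvPolynomial.aeval sub3 f = 0 := by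
        rw [← hρf, hΘ, mul_zero]
      have hvanH : ∀ y : Fin 3 → k, eval (y 0 • c + y 1 • a + y 2 • b) f = 0 := by
        intro y
        rw [← hρ3eval, hρ0, map_zero]
      -- four-variable substitution
      set sub4 : Fin 4 → MvPolynomial (Fin 4) k := fun i =>
        MvPolynomial.C (d i) * MvPolynomial.X 0 + MvPolynomial.C (a i) * MvPolynomial.X 1
          + MvPolynomial.C (b i) * MvPolynomial.X 2 + MvPolynomial.C (c i) * MvPolynomial.X 3
        with hsub4
      have hsub4hom : ∀ i, (sub4 i).IsHomogeneous 1 := by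
        intro i
        exact (((isHomogeneous_C_mul_X _ _).add (isHomogeneous_C_mul_X _ _)).add
          (isHomogeneous_C_mul_X _ _)).add (isHomogeneous_C_mul_X _ _)
      have hρ4eval : ∀ (h : MvPolynomial (Fin 4) k) (y : Fin 4 → k),
          eval y (MvPolynomial.aeval sub4 h) = eval (y 0 • d + y 1 • a + y 2 • b + y 3 • c) h := by
        intro h y
        rw [eval_aeval_mv]
        have hv : (fun i => eval y (sub4 i)) = (y 0 • d + y 1 • a + y 2 • b + y 3 • c) := by
          funext i
          simp [hsub4]
          ring
        rw [hv]
      set G := divD 3 (MvPolynomial.aeval sub4 f) with hGdef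
      have hXG : MvPolynomial.X 0 * G = MvPolynomial.aeval sub4 f := by
        apply X_mul_divD
        intro y
        rw [hρ4eval]
        have harr : (Fin.cons (0:k) y : Fin 4 → k) 0 • d + (Fin.cons (0:k) y : Fin 4 → k) 1 • a
            + (Fin.cons (0:k) y : Fin 4 → k) 2 • b + (Fin.cons (0:k) y : Fin 4 → k) 3 • c
            = (![y 2, y 0, y 1] : Fin 3 → k) 0 • c + (![y 2, y 0, y 1] : Fin 3 → k) 1 • a
              + (![y 2, y 0, y 1] : Fin 3 → k) 2 • b := by
          rw [show ((1 : Fin 4) = Fin.succ 0) from rfl, show ((2 : Fin 4) = Fin.succ 1) from rfl,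
            show ((3 : Fin 4) = Fin.succ 2) from rfl]
          rw [Fin.cons_zero, Fin.cons_succ, Fin.cons_succ, Fin.cons_succ]
          simp only [Matrix.cons_val_zero, Matrix.cons_val_one, Matrix.head_cons,
            Matrix.cons_val_two, Matrix.tail_cons]
          rw [zero_smul, zero_add]
          abel
        rw [harr]
        exact hvanH _
      have hGhom : G.IsHomogeneous 2 := by
        apply isHomogeneous_of_X_mul (i := (0 : Fin 4)) (n := 2)
        rw [hXG]
        simpa using hf3.aeval sub4 hsub4hom
      -- reverse substitution
      choose Lc hLchom hLceval using fun j : Fin 4 => functional_poly (B4.coord j)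
      set g := MvPolynomial.aeval Lc G with hgdef
      have hghom : g.IsHomogeneous 2 := by
        simpa [hgdef] using hGhom.aeval Lc hLchom
      have hgx : ∀ x : Fin 4 → k, eval x g = eval (fun j => B4.repr x j) G := by
        intro x
        rw [hgdef, eval_aeval_mv]
        have hv : (fun j => eval x (Lc j)) = fun j => B4.repr x j := by
          funext j
          rw [hLceval j x, B4.coord_apply]
        rw [hv]
      have hfx : ∀ x : Fin 4 → k, eval x f = B4.repr x 0 * eval x g := by
        intro x
        have h1 : eval (fun j => B4.repr x j) (MvPolynomial.aeval sub4 f) = eval x f := by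
          rw [hρ4eval, ← hrep4 x]
        rw [← h1, ← hXG, map_mul, eval_X, hgx]
      -- g vanishes on the lines V pp for pp ≠ 0
      have hgline : ∀ pp : Fin 3, pp ≠ 0 → ∀ x ∈ V pp, eval x g = 0 := by
        intro pp hpp
        set sub2 : Fin 4 → MvPolynomial (Fin 2) k := fun i =>
          MvPolynomial.C (U pp i) * MvPolynomial.X 0 + MvPolynomial.C (Vv pp i) * MvPolynomial.X 1
          with hsub2
        have hev2 : ∀ (h : MvPolynomial (Fin 4) k) (y : Fin 2 → k),
            eval y (MvPolynomial.aeval sub2 h) = eval (y 0 • U pp + y 1 • Vv pp) h := by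
          intro h y
          rw [eval_aeval_mv]
          have hv : (fun i => eval y (sub2 i)) = (y 0 • U pp + y 1 • Vv pp) := by
            funext i
            simp [hsub2]
            ring
          rw [hv]
        have hprod : MvPolynomial.aeval sub2 (Lc 0) * MvPolynomial.aeval sub2 g = 0 := by
          rw [← map_mul]
          apply MvPolynomial.funext (q := 0)
          intro y
          rw [hev2, map_zero]
          have hptV : y 0 • U pp + y 1 • Vv pp ∈ V pp :=
            (V pp).add_mem ((V pp).smul_mem _ (hUmem pp)) ((V pp).smul_mem _ (hVvmem pp))
          have h2 : eval (y 0 • U pp + y 1 • Vv pp) (Lc 0 * g) =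
              B4.repr (y 0 • U pp + y 1 • Vv pp) 0 * eval (y 0 • U pp + y 1 • Vv pp) g := by
            rw [map_mul, hLceval 0, B4.coord_apply]
          rw [h2, ← hfx]
          exact hfV pp _ hptV
        rcases mul_eq_zero.mp hprod with hA | hB
        · exfalso
          have hcval : ∀ y : Fin 2 → k, B4.repr (y 0 • U pp + y 1 • Vv pp) 0 = 0 := by
            intro y
            have := congrArg (eval y) hA
            rw [hev2, map_zero, hLceval 0, B4.coord_apply] at this
            exact this
          have hVle : V pp ≤ Submodule.span k (Set.range ![a, b, c]) := by
            intro x hx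
            obtain ⟨r, s, hx2⟩ := hlinerep pp x hx
            apply hcoord0span
            rw [hx2]
            have := hcval ![r, s]
            simpa using this
          have hV0le : V 0 ≤ Submodule.span k (Set.range ![a, b, c]) := by
            intro x hx
            obtain ⟨r, s, hx2⟩ := hlinerep 0 x hx
            rw [hx2]
            have hma : a ∈ Set.range ![a, b, c] := ⟨0, rfl⟩
            have hmb : b ∈ Set.range ![a, b, c] := ⟨1, rfl⟩
            exact Submodule.add_mem _
              (Submodule.smul_mem _ _ (Submodule.subset_span hma))
              (Submodule.smul_mem _ _ (Submodule.subset_span hmb))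
          have hsup : V 0 ⊔ V pp ≤ Submodule.span k (Set.range ![a, b, c]) :=
            sup_le hV0le hVle
          have h5 := Submodule.finrank_sup_add_finrank_inf_eq (V 0) (V pp)
          rw [hVdim 0, hVdim pp, hVdisj 0 pp (Ne.symm hpp), finrank_bot] at h5
          have h6 : Module.finrank k ↥(V 0 ⊔ V pp) ≤
              Module.finrank k ↥(Submodule.span k (Set.range ![a, b, c])) := by
            haveI : FiniteDimensional k ↥(Submodule.span k (Set.range ![a, b, c])) := by
              rw [hspan_eq_ker]
              infer_instance
            exact Submodule.finrank_mono hsup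
          rw [hspanabc_rank] at h6
          omega
        · intro x hx
          obtain ⟨r, s, hx2⟩ := hlinerep pp x hx
          have := congrArg (eval ![r, s]) hB
          rw [hev2, map_zero] at this
          rw [hx2]
          simpa using this
      -- g vanishes at the w i
      have hgw : ∀ i, eval (w i) g = 0 := by
        intro i
        have h1 := hfx (w i)
        rw [hfw i] at h1
        rcases mul_eq_zero.mp h1.symm with h | h
        · exact absurd h (hwcoord i)
        · exact h
      have hg0 : g = 0 := hres 0 g hghom (fun p hp v hv => hgline p hp v hv) hgw
      apply MvPolynomial.funext (q := 0)
      intro x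
      rw [hfx x, hg0]
      simp
    -- conclude
    haveI hTfd : FiniteDimensional k ↥T :=
      Submodule.finiteDimensional_of_le (inf_le_left : T ≤ homogeneousSubmodule (Fin 3) k 2)
    set L : ↥Km →ₗ[k] ↥T := LinearMap.codRestrict T (Θ0 ∘ₗ Km.subtype)
      (fun x => hmemT x.1 x.2) with hL
    have hLinj : Function.Injective L := by
      rw [← LinearMap.ker_eq_bot]
      apply (Submodule.eq_bot_iff _).mpr
      intro x hx
      have h1 : Θ0 x.1 = 0 := congrArg Subtype.val hx
      exact Subtype.ext (hΘinj x.1 x.2 h1)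
    have hrankle := LinearMap.finrank_le_finrank_of_injective hLinj
    -- finrank T ≤ 4
    have hTrank : Module.finrank k ↥T ≤ 4 := by
      have h1 := finrank_homog_inf_ker (k := k) (n := 2) pts2
      have h2 := finrank_homog_le (k := k) 3 2
      rw [show (Finset.Nat.antidiagonalTuple 3 2).card = 6 from rfl] at h2
      -- the two point evaluations are surjective on the quadrics
      have hpind : LinearIndependent k ![p1, p2] := by
        rw [linearIndependent_fin2]
        constructor
        · intro hp2z
          apply hz2ne
          rw [← hp2]
          simp only [Matrix.cons_val_one, Matrix.head_cons, Matrix.cons_val_zero] at hp2z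
          rw [hp2z]
          simp
        · intro α hα
          simp only [Matrix.cons_val_one, Matrix.head_cons, Matrix.cons_val_zero] at hα
          have h3 : α • z2 = z1 := by
            rw [← hp1, ← hp2, ← hα]
            simp only [Pi.smul_apply, smul_add, smul_smul]
            rfl
          have h4 : z1 ∈ V 1 ⊓ V 2 := ⟨hz1V, by rw [← h3]; exact (V 2).smul_mem _ hz2V⟩
          rw [hVdisj 1 2 (by decide)] at h4
          exact hz1ne h4
      have hpind' : LinearIndependent k ![p2, p1] := by
        rw [linearIndependent_fin2] at hpind ⊢
        simp only [Matrix.cons_val_one, Matrix.head_cons, Matrix.cons_val_zero] at hpind ⊢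
        obtain ⟨h5, h6⟩ := hpind
        constructor
        · intro hp1z
          exact (h6 0) (by rw [hp1z]; simp)
        · intro α hα
          rcases eq_or_ne α 0 with rfl | hαne
          · rw [zero_smul] at hα
            exact h5 hα.symm
          · exact (h6 α⁻¹) (by rw [← hα]; rw [smul_smul, inv_mul_cancel₀ hαne, one_smul])
      obtain ⟨φ1, hφ1a, hφ1b⟩ := exists_dual_pair hpind
      obtain ⟨φ2, hφ2a, hφ2b⟩ := exists_dual_pair hpind'
      obtain ⟨L1, hL1hom, hL1eval⟩ := functional_poly φ1
      obtain ⟨L2, hL2hom, hL2eval⟩ := functional_poly φ2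
      have hsurj : LinearMap.range ((evalsLM pts2) ∘ₗ (homogeneousSubmodule (Fin 3) k 2).subtype) = ⊤ := by
        rw [LinearMap.range_eq_top]
        intro y
        have hqhom : (y 0 • (L1 * L1) + y 1 • (L2 * L2)).IsHomogeneous 2 := by
          have h7 : (L1 * L1).IsHomogeneous 2 := by simpa using hL1hom.mul hL1hom
          have h8 : (L2 * L2).IsHomogeneous 2 := by simpa using hL2hom.mul hL2hom
          exact ((homogeneousSubmodule (Fin 3) k 2).smul_mem _ h7).add
            ((homogeneousSubmodule (Fin 3) k 2).smul_mem _ h8)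
        refine ⟨⟨y 0 • (L1 * L1) + y 1 • (L2 * L2), hqhom⟩, ?_⟩
        funext j
        simp only [LinearMap.coe_comp, Function.comp_apply, Submodule.coe_subtype, evalsLM_apply]
        fin_cases j
        · show eval p1 _ = y 0
          rw [map_add, MvPolynomial.smul_eval, MvPolynomial.smul_eval, map_mul, map_mul,
            hL1eval, hL2eval, hφ1a, hφ2b]
          ring
        · show eval p2 _ = y 1
          rw [map_add, MvPolynomial.smul_eval, MvPolynomial.smul_eval, map_mul, map_mul,
            hL1eval, hL2eval, hφ1b, hφ2a]
          ring
      rw [hsurj] at h1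
      have h9 : Module.finrank k ↥(⊤ : Submodule k (Fin 2 → k)) = 2 := by
        rw [finrank_top]
        simp [Module.finrank_pi]
      rw [← hT] at h1
      omega
    omega
  omega
end

section
/- Let V₁, V₂, V₃ ⊆ k⁴ be 2-dimensional linear subspaces with V_i ∩ V_j = {0} for i ≠ j, and let w ∈ k⁴ be a nonzero vector such that every nonzero homogeneous polynomial of degree 2 vanishing on V₁ ∪ V₂ ∪ V₃ is nonzero at w (the point P = [w] does not lie on the quadric surface containing the three lines). For l = 1, 2, 3 let h_l be a nonzero linear form (homogeneous polynomial of degree 1) vanishing on the subspace V_l and at w (the equation of the plane spanned by the line L_l and the point P). Then h₁, h₂, h₃ are linearly independent over k. -/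
open MvPolynomial

section Aux

variable {k : Type*} [Field k]

lemma aux_single_of_degree_one_s7 {n : ℕ} (d : Fin n →₀ ℕ)
    (hd : Finsupp.degree d = 1) : ∃ m, d = Finsupp.single m 1 := by
  classical
  have hsupp : d.support.Nonempty := by
    rcases Finset.eq_empty_or_nonempty d.support with h | h
    · exfalso
      have : d = 0 := by
        ext i; by_contra hi
        exact (Finset.notMem_empty i) (h ▸ Finsupp.mem_support_iff.mpr hi)
      simp [this, map_zero] at hd
    · exact h
  obtain ⟨m, hm⟩ := hsupp
  refine ⟨m, ?_⟩
  have hdm : d m ≠ 0 := Finsupp.mem_support_iff.mp hm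
  have hsum : ∑ i ∈ d.support, d i = 1 := hd
  have h1 : d m + ∑ i ∈ d.support.erase m, d i = 1 := by
    rw [Finset.add_sum_erase _ _ hm]; exact hsum
  have hdm1 : d m = 1 := by omega
  have hrest : ∑ i ∈ d.support.erase m, d i = 0 := by omega
  ext i
  rcases eq_or_ne i m with rfl | hne
  · simp [hdm1]
  · have : d i = 0 := by
      by_contra hi
      have hmem : i ∈ d.support.erase m := Finset.mem_erase.mpr ⟨hne, Finsupp.mem_support_iff.mpr hi⟩
      have := (Finset.sum_eq_zero_iff.mp hrest) i hmem
      exact hi this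
    simp [this, Finsupp.single_apply, (Ne.symm hne : m ≠ i)]

/-- The linear functional attached to a degree-1 polynomial. -/
noncomputable def linFun (q : MvPolynomial (Fin 4) k) : (Fin 4 → k) →ₗ[k] k :=
  ∑ m, MvPolynomial.coeff (Finsupp.single m 1) q • LinearMap.proj m

lemma linFun_apply (q : MvPolynomial (Fin 4) k) (v : Fin 4 → k) :
    linFun q v = ∑ m, MvPolynomial.coeff (Finsupp.single m 1) q * v m := by
  simp [linFun]

lemma eval_hom_one (q : MvPolynomial (Fin 4) k) (hq : q.IsHomogeneous 1)
    (v : Fin 4 → k) : eval v q = linFun q v := by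
  classical
  rw [linFun_apply, eval_eq]
  have hsub : q.support ⊆ Finset.image (fun m => Finsupp.single m 1) Finset.univ := by
    intro d hd
    have hcoeff : coeff d q ≠ 0 := Finsupp.mem_support_iff.mp hd
    have hdeg : Finsupp.degree d = 1 := by
      have := hq hcoeff
      rwa [Finsupp.degree_eq_weight_one]
    obtain ⟨m, rfl⟩ := aux_single_of_degree_one_s7 d hdeg
    exact Finset.mem_image.mpr ⟨m, Finset.mem_univ m, rfl⟩
  rw [Finset.sum_subset hsub]
  · rw [Finset.sum_image (fun a _ b _ hab => Finsupp.single_left_injective one_ne_zero hab)]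
    refine Finset.sum_congr rfl fun m _ => ?_
    congr 1
    rw [Finsupp.support_single_ne_zero _ one_ne_zero]
    simp
  · intro d _ hd
    have : coeff d q = 0 := by_contra fun hc => hd (Finsupp.mem_support_iff.mpr hc)
    simp [this]

end Aux

section Aux2
variable {k : Type*} [Field k]

lemma poly_eq_zero_of_eval_zero [Infinite k] (q : MvPolynomial (Fin 4) k)
    (hq : ∀ v, eval v q = 0) : q = 0 :=
  MvPolynomial.funext (fun v => by simp [hq v])

/-- The degree-1 polynomial attached to a linear functional. -/
noncomputable def polOf (φ : (Fin 4 → k) →ₗ[k] k) : MvPolynomial (Fin 4) k :=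
  ∑ m, MvPolynomial.C (φ (Pi.single m 1)) * X m

lemma polOf_isHomogeneous (φ : (Fin 4 → k) →ₗ[k] k) : (polOf φ).IsHomogeneous 1 := by
  rw [show (polOf φ) = ∑ m, MvPolynomial.C (φ (Pi.single m 1)) * X m from rfl,
    ← mem_homogeneousSubmodule]
  refine Submodule.sum_mem _ fun m _ => ?_
  rw [mem_homogeneousSubmodule]
  simpa using (isHomogeneous_C (Fin 4) (φ (Pi.single m 1))).mul (isHomogeneous_X k m)

lemma eval_polOf (φ : (Fin 4 → k) →ₗ[k] k) (v : Fin 4 → k) :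
    eval v (polOf φ) = φ v := by
  have hv : v = ∑ m, Pi.single m (v m) := (Finset.univ_sum_single v).symm
  conv_rhs => rw [hv]
  rw [map_sum]
  rw [polOf, map_sum]
  refine Finset.sum_congr rfl fun m _ => ?_
  have : Pi.single m (v m) = v m • (Pi.single m 1 : Fin 4 → k) := by
    ext i
    rcases eq_or_ne i m with rfl | hne
    · simp
    · simp [Pi.single_apply, hne]
  rw [this, map_smul]
  simp [mul_comm]

end Aux2

section Quad
variable {k : Type*} [Field k]

lemma exists_quadric
    (V0 V1 V2 : Submodule k (Fin 4 → k))
    (h0 : Module.finrank k V0 = 2) (h1 : Module.finrank k V1 = 2)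
    (h2 : Module.finrank k V2 = 2)
    (hdisj : V0 ⊓ V1 = ⊥)
    (u₀ u₁ u₂ : Fin 4 → k) (hu0 : u₀ ∈ V0) (hu1 : u₁ ∈ V1) (hu2 : u₂ ∈ V2)
    (α β : k) (hα : α ≠ 0) (hβ : β ≠ 0) (hu2eq : u₂ = α • u₀ + β • u₁)
    (w : Fin 4 → k) (s t : k) (hweq : w = s • u₀ + t • u₁) :
    ∃ q : MvPolynomial (Fin 4) k, q.IsHomogeneous 2 ∧ q ≠ 0 ∧
      (∀ v ∈ V0, eval v q = 0) ∧ (∀ v ∈ V1, eval v q = 0) ∧ (∀ v ∈ V2, eval v q = 0) ∧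
      eval w q = 0 := by
  classical
  -- bases
  let eA : Module.Basis (Fin 2) k V0 := Module.finBasisOfFinrankEq k V0 h0
  let eB : Module.Basis (Fin 2) k V1 := Module.finBasisOfFinrankEq k V1 h1
  let eC : Module.Basis (Fin 2) k V2 := Module.finBasisOfFinrankEq k V2 h2
  have hliA : LinearIndependent k (fun i => (eA i : Fin 4 → k)) :=
    eA.linearIndependent.map' V0.subtype (Submodule.ker_subtype V0)
  have hliB : LinearIndependent k (fun i => (eB i : Fin 4 → k)) :=
    eB.linearIndependent.map' V1.subtype (Submodule.ker_subtype V1)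
  have hspanA : Submodule.span k (Set.range fun i => (eA i : Fin 4 → k)) = V0 := by
    have : (Set.range fun i => (eA i : Fin 4 → k)) = V0.subtype '' Set.range eA := by
      rw [← Set.range_comp]; rfl
    rw [this, Submodule.span_image, eA.span_eq, Submodule.map_subtype_top]
  have hspanB : Submodule.span k (Set.range fun i => (eB i : Fin 4 → k)) = V1 := by
    have : (Set.range fun i => (eB i : Fin 4 → k)) = V1.subtype '' Set.range eB := by
      rw [← Set.range_comp]; rfl
    rw [this, Submodule.span_image, eB.span_eq, Submodule.map_subtype_top]
  have hli : LinearIndependent k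
      (Sum.elim (fun i => (eA i : Fin 4 → k)) (fun j => (eB j : Fin 4 → k))) := by
    refine hliA.sum_type hliB ?_
    rw [hspanA, hspanB]
    exact disjoint_iff.mpr hdisj
  have hcard : Fintype.card (Fin 2 ⊕ Fin 2) = Module.finrank k (Fin 4 → k) := by
    simp [Module.finrank_pi]
  let B : Module.Basis (Fin 2 ⊕ Fin 2) k (Fin 4 → k) :=
    basisOfLinearIndependentOfCardEqFinrank hli hcard
  have hBval : ∀ st, B st = Sum.elim (fun i => (eA i : Fin 4 → k))
      (fun j => (eB j : Fin 4 → k)) st := fun st => by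
    rw [coe_basisOfLinearIndependentOfCardEqFinrank]
  -- coordinate functionals
  let f : Fin 2 → ((Fin 4 → k) →ₗ[k] k) := fun i => B.coord (Sum.inl i)
  let g : Fin 2 → ((Fin 4 → k) →ₗ[k] k) := fun j => B.coord (Sum.inr j)
  have hcoord : ∀ (st st' : Fin 2 ⊕ Fin 2),
      B.coord st (B st') = if st' = st then 1 else 0 := by
    intro st st'
    rw [Module.Basis.coord_apply, B.repr_self, Finsupp.single_apply]
  have hfA : ∀ i i', f i ((eA i' : Fin 4 → k)) = if i' = i then 1 else 0 := by
    intro i i'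
    have := hcoord (Sum.inl i) (Sum.inl i')
    rw [hBval (Sum.inl i')] at this
    simpa [f, Sum.inl.injEq] using this
  have hgB : ∀ j j', g j ((eB j' : Fin 4 → k)) = if j' = j then 1 else 0 := by
    intro j j'
    have := hcoord (Sum.inr j) (Sum.inr j')
    rw [hBval (Sum.inr j')] at this
    simpa [g, Sum.inr.injEq] using this
  have hfB : ∀ i j', f i ((eB j' : Fin 4 → k)) = 0 := by
    intro i j'
    have := hcoord (Sum.inl i) (Sum.inr j')
    rw [hBval (Sum.inr j')] at this
    simpa [f] using this
  have hgA : ∀ j i', g j ((eA i' : Fin 4 → k)) = 0 := by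
    intro j i'
    have := hcoord (Sum.inr j) (Sum.inl i')
    rw [hBval (Sum.inl i')] at this
    simpa [g] using this
  -- f vanishes on V1, g vanishes on V0
  have hfV1 : ∀ i, ∀ v ∈ V1, f i v = 0 := by
    intro i v hv
    have hle : V1 ≤ LinearMap.ker (f i) := by
      rw [← hspanB, Submodule.span_le]
      rintro x ⟨j', rfl⟩
      simp [LinearMap.mem_ker, hfB i j']
    exact hle hv
  have hgV0 : ∀ j, ∀ v ∈ V0, g j v = 0 := by
    intro j v hv
    have hle : V0 ≤ LinearMap.ker (g j) := by
      rw [← hspanA, Submodule.span_le]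
      rintro x ⟨i', rfl⟩
      simp [LinearMap.mem_ker, hgA j i']
    exact hle hv
  -- conditions linear map
  let d₁ : Fin 4 → k := (eC 0 : Fin 4 → k)
  let d₂ : Fin 4 → k := (eC 1 : Fin 4 → k)
  let ℓ : (Fin 4 → k) → (((Fin 2 × Fin 2) → k) →ₗ[k] k) := fun x =>
    ∑ p : Fin 2 × Fin 2, (f p.1 x * g p.2 x) • LinearMap.proj p
  let T : ((Fin 2 × Fin 2) → k) →ₗ[k] (Fin 3 → k) :=
    LinearMap.pi (fun r => ℓ (![d₁, d₂, d₁ + d₂] r))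
  have hTnotinj : ¬ Function.Injective T := by
    intro hinj
    have := LinearMap.finrank_le_finrank_of_injective hinj
    simp [Module.finrank_pi] at this
  rw [← LinearMap.ker_eq_bot] at hTnotinj
  obtain ⟨c, hcker, hcne⟩ := (Submodule.ne_bot_iff _).mp hTnotinj
  -- the bilinear function
  let M : (Fin 4 → k) → (Fin 4 → k) → k := fun u v =>
    ∑ p : Fin 2 × Fin 2, c p * (f p.1 u * g p.2 v)
  have hM1add : ∀ a b v, M (a + b) v = M a v + M b v := by
    intro a b v
    simp only [M, map_add, add_mul, mul_add, Finset.sum_add_distrib]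
  have hM2add : ∀ u a b, M u (a + b) = M u a + M u b := by
    intro u a b
    simp only [M, map_add, add_mul, mul_add, Finset.sum_add_distrib]
  have hM1smul : ∀ (x : k) a v, M (x • a) v = x * M a v := by
    intro x a v
    simp only [M, map_smul, smul_eq_mul, Finset.mul_sum]
    exact Finset.sum_congr rfl fun p _ => by ring
  have hM2smul : ∀ u (x : k) a, M u (x • a) = x * M u a := by
    intro u x a
    simp only [M, map_smul, smul_eq_mul, Finset.mul_sum]
    exact Finset.sum_congr rfl fun p _ => by ring
  have hexp : ∀ (x y : k) a b, M (x • a + y • b) (x • a + y • b)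
      = x * x * M a a + x * y * M a b + y * x * M b a + y * y * M b b := by
    intro x y a b
    simp only [hM1add, hM2add, hM1smul, hM2smul]
    ring
  -- the polynomial
  let q : MvPolynomial (Fin 4) k :=
    ∑ p : Fin 2 × Fin 2, MvPolynomial.C (c p) * (polOf (f p.1) * polOf (g p.2))
  have hevalq : ∀ v, eval v q = M v v := by
    intro v
    simp only [q, M, map_sum, map_mul, eval_C, eval_polOf]
  have hqhom : q.IsHomogeneous 2 := by
    rw [← mem_homogeneousSubmodule]
    refine Submodule.sum_mem _ fun p _ => ?_
    rw [mem_homogeneousSubmodule]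
    have := (isHomogeneous_C (Fin 4) (c p)).mul
      ((polOf_isHomogeneous (f p.1)).mul (polOf_isHomogeneous (g p.2)))
    simpa using this
  -- conditions satisfied
  have hcond : ∀ r : Fin 3, M (![d₁, d₂, d₁ + d₂] r) (![d₁, d₂, d₁ + d₂] r) = 0 := by
    intro r
    have hTc : T c = 0 := LinearMap.mem_ker.mp hcker
    have : T c r = 0 := by rw [hTc]; rfl
    rw [show T c r = ℓ (![d₁, d₂, d₁ + d₂] r) c from rfl] at this
    rw [show ℓ (![d₁, d₂, d₁ + d₂] r) c
        = M (![d₁, d₂, d₁ + d₂] r) (![d₁, d₂, d₁ + d₂] r) from ?_] at this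
    · exact this
    · simp only [ℓ, M, LinearMap.sum_apply, LinearMap.smul_apply, LinearMap.proj_apply,
        smul_eq_mul]
      exact Finset.sum_congr rfl fun p _ => by ring
  have hMd11 : M d₁ d₁ = 0 := by simpa using hcond 0
  have hMd22 : M d₂ d₂ = 0 := by simpa using hcond 1
  have hMdmix : M d₁ d₂ + M d₂ d₁ = 0 := by
    have := hcond 2
    simp only [Matrix.cons_val_two, Matrix.tail_cons, Matrix.head_cons] at this
    simp only [hM1add, hM2add, hMd11, hMd22] at this
    linear_combination this
  -- vanishing on V2
  have hvanV2 : ∀ v ∈ V2, M v v = 0 := by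
    intro v hv
    have hrepr : v = (eC.repr ⟨v, hv⟩ 0) • d₁ + (eC.repr ⟨v, hv⟩ 1) • d₂ := by
      have h4 : ((∑ i, eC.repr ⟨v, hv⟩ i • eC i : V2) : Fin 4 → k) = v := by
        rw [eC.sum_repr ⟨v, hv⟩]
      rw [Fin.sum_univ_two] at h4
      simp only [Submodule.coe_add, SetLike.val_smul] at h4
      exact h4.symm
    rw [hrepr, hexp]
    rw [hMd11, hMd22]
    set x := eC.repr ⟨v, hv⟩ 0
    set y := eC.repr ⟨v, hv⟩ 1
    have : x * y * M d₁ d₂ + y * x * M d₂ d₁ = x * y * (M d₁ d₂ + M d₂ d₁) := by ring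
    rw [mul_zero, mul_zero, zero_add, add_zero, this, hMdmix, mul_zero]
  -- vanishing on V0 and V1
  have hvanV0 : ∀ v ∈ V0, M v v = 0 := by
    intro v hv
    refine Finset.sum_eq_zero fun p _ => ?_
    rw [hgV0 p.2 v hv, mul_zero, mul_zero]
  have hvanV1 : ∀ v ∈ V1, M v v = 0 := by
    intro v hv
    refine Finset.sum_eq_zero fun p _ => ?_
    rw [hfV1 p.1 v hv, zero_mul, mul_zero]
  -- vanishing at w
  have hMmixW : M u₀ u₁ = 0 := by
    have h2' : M u₂ u₂ = 0 := hvanV2 u₂ hu2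
    rw [hu2eq, hexp] at h2'
    have hfu1 : ∀ p : Fin 2 × Fin 2, f p.1 u₁ = 0 := fun p => hfV1 p.1 u₁ hu1
    have hgu0 : ∀ p : Fin 2 × Fin 2, g p.2 u₀ = 0 := fun p => hgV0 p.2 u₀ hu0
    have hM00 : M u₀ u₀ = 0 := hvanV0 u₀ hu0
    have hM11 : M u₁ u₁ = 0 := hvanV1 u₁ hu1
    have hM10 : M u₁ u₀ = 0 := by
      refine Finset.sum_eq_zero fun p _ => ?_
      rw [hfu1 p, zero_mul, mul_zero]
    rw [hM00, hM11, hM10] at h2'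
    have : α * β * M u₀ u₁ = 0 := by linear_combination h2'
    rcases mul_eq_zero.mp this with h | h
    · exact absurd h (mul_ne_zero hα hβ)
    · exact h
  have hevalw : eval w q = 0 := by
    rw [hevalq, hweq, hexp]
    have hM00 : M u₀ u₀ = 0 := hvanV0 u₀ hu0
    have hM11 : M u₁ u₁ = 0 := hvanV1 u₁ hu1
    have hM10 : M u₁ u₀ = 0 := by
      refine Finset.sum_eq_zero fun p _ => ?_
      rw [hfV1 p.1 u₁ hu1, zero_mul, mul_zero]
    rw [hM00, hM11, hM10, hMmixW]
    ring
  -- q ≠ 0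
  obtain ⟨p₀, hp₀⟩ := Function.ne_iff.mp hcne
  have hqne : q ≠ 0 := by
    intro hq0
    apply hp₀
    have := hevalq ((eA p₀.1 : Fin 4 → k) + (eB p₀.2 : Fin 4 → k))
    rw [hq0, map_zero] at this
    have hMval : M ((eA p₀.1 : Fin 4 → k) + (eB p₀.2 : Fin 4 → k))
        ((eA p₀.1 : Fin 4 → k) + (eB p₀.2 : Fin 4 → k)) = c p₀ := by
      rw [show M ((eA p₀.1 : Fin 4 → k) + (eB p₀.2 : Fin 4 → k))
          ((eA p₀.1 : Fin 4 → k) + (eB p₀.2 : Fin 4 → k))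
          = ∑ p : Fin 2 × Fin 2, c p * ((f p.1 (eA p₀.1 : Fin 4 → k) + f p.1 (eB p₀.2 : Fin 4 → k))
            * (g p.2 (eA p₀.1 : Fin 4 → k) + g p.2 (eB p₀.2 : Fin 4 → k))) from
        Finset.sum_congr rfl fun p _ => by rw [map_add, map_add]]
      rw [Finset.sum_eq_single p₀]
      · rw [hfA, hfB, hgA, hgB]
        simp
      · intro p _ hne
        rw [hfA, hfB, hgA, hgB]
        by_cases h1 : p₀.1 = p.1
        · have h2 : ¬ (p₀.2 = p.2) := fun h2 => hne (Prod.ext_iff.mpr ⟨h1, h2⟩).symm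
          simp [h1, h2]
        · simp [h1]
      · intro hmem
        exact absurd (Finset.mem_univ p₀) hmem
    rw [hMval] at this
    exact this.symm
  exact ⟨q, hqhom, hqne, fun v hv => by rw [hevalq]; exact hvanV0 v hv,
    fun v hv => by rw [hevalq]; exact hvanV1 v hv,
    fun v hv => by rw [hevalq]; exact hvanV2 v hv, hevalw⟩

end Quad



/-- If a point `P` lies off the quadric through three pairwise disjoint lines in
`ℙ³`, the equations of the three planes spanned by `P` and each line are linearly
independent. -/
theorem stmt_7 {k : Type*} [Field k] [IsAlgClosed k] [CharZero k]
    (V : Fin 3 → Submodule k (Fin 4 → k))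
    (hVdim : ∀ p, Module.finrank k (V p) = 2)
    (hVdisj : ∀ p q : Fin 3, p ≠ q → V p ⊓ V q = ⊥)
    (w : Fin 4 → k) (hw : w ≠ 0)
    (hquad : ∀ q : MvPolynomial (Fin 4) k, q.IsHomogeneous 2 → q ≠ 0 →
      (∀ p : Fin 3, ∀ v ∈ V p, eval v q = 0) → eval w q ≠ 0)
    (h : Fin 3 → MvPolynomial (Fin 4) k)
    (hh1 : ∀ l, (h l).IsHomogeneous 1)
    (hhne : ∀ l, h l ≠ 0)
    (hhvan : ∀ l, ∀ v ∈ V l, eval v (h l) = 0)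
    (hhw : ∀ l, eval w (h l) = 0) :
    LinearIndependent k h := by
  classical
  by_contra hdep
  obtain ⟨c, hcsum, i, hci⟩ := Fintype.not_linearIndependent_iff.mp hdep
  set φ : Fin 3 → ((Fin 4 → k) →ₗ[k] k) := fun l => linFun (h l) with hφdef
  have hφeval : ∀ l v, eval v (h l) = φ l v := fun l v => eval_hom_one (h l) (hh1 l) v
  have hφne : ∀ l, φ l ≠ 0 := by
    intro l h0
    apply hhne l
    apply poly_eq_zero_of_eval_zero
    intro v
    rw [hφeval l v, h0]
    rfl
  have hφvan : ∀ l, ∀ v ∈ V l, φ l v = 0 := fun l v hv => (hφeval l v) ▸ hhvan l v hv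
  have hφw : ∀ l, φ l w = 0 := fun l => (hφeval l w) ▸ hhw l
  have key : ∀ v, c 0 * φ 0 v + c 1 * φ 1 v + c 2 * φ 2 v = 0 := by
    intro v
    have h1 := congrArg (eval v) hcsum
    rw [map_sum, Fin.sum_univ_three, map_zero] at h1
    simpa only [smul_eval, hφeval] using h1
  have hsum3 : c 0 • φ 0 + c 1 • φ 1 + c 2 • φ 2 = 0 := by
    refine LinearMap.ext fun v => ?_
    simpa using key v
  -- sup of two distinct lines is everything
  have hsup : ∀ p q : Fin 3, p ≠ q → V p ⊔ V q = ⊤ := by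
    intro p q hpq
    apply Submodule.eq_top_of_finrank_eq
    have hh := Submodule.finrank_sup_add_finrank_inf_eq (V p) (V q)
    rw [hVdisj p q hpq] at hh
    rw [hVdim, hVdim, finrank_bot] at hh
    have h4 : Module.finrank k (Fin 4 → k) = 4 := by simp [Module.finrank_pi]
    omega
  -- no nontrivial dependence between two of the functionals
  have hvanish : ∀ (p q : Fin 3), p ≠ q → ∀ a b : k, a • φ p + b • φ q = 0 → a ≠ 0 → False := by
    intro p q hpq a b hab ha
    apply hφne p
    refine LinearMap.ext fun v => ?_
    have hv : v ∈ V p ⊔ V q := by rw [hsup p q hpq]; trivial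
    obtain ⟨x, hx, y, hy, rfl⟩ := Submodule.mem_sup.mp hv
    have h1 : a * φ p y + b * φ q y = 0 := by
      have := congrArg (fun ψ : (Fin 4 → k) →ₗ[k] k => ψ y) hab
      simpa using this
    rw [hφvan q y hy, mul_zero, add_zero] at h1
    have hpy : φ p y = 0 := by
      rcases mul_eq_zero.mp h1 with hh | hh
      · exact absurd hh ha
      · exact hh
    simp [map_add, hφvan p x hx, hpy]
  -- all coefficients are nonzero
  have hc0 : c 0 ≠ 0 := by
    intro hc0e
    rw [hc0e, zero_smul, zero_add] at hsum3
    have hc1e : c 1 = 0 := by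
      by_contra hcc
      exact hvanish 1 2 (by decide) _ _ hsum3 hcc
    have hc2e : c 2 = 0 := by
      by_contra hcc
      rw [add_comm] at hsum3
      exact hvanish 2 1 (by decide) _ _ hsum3 hcc
    fin_cases i
    · exact hci hc0e
    · exact hci hc1e
    · exact hci hc2e
  have hc1 : c 1 ≠ 0 := by
    intro hc1
    rw [hc1, zero_smul, add_zero] at hsum3
    exact hvanish 0 2 (by decide) _ _ hsum3 hc0
  have hc2 : c 2 ≠ 0 := by
    intro hc2
    rw [hc2, zero_smul, add_zero] at hsum3
    exact hvanish 0 1 (by decide) _ _ hsum3 hc0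
  -- kernels
  have hVker : ∀ l, V l ≤ LinearMap.ker (φ l) := fun l v hv => by
    rw [LinearMap.mem_ker]; exact hφvan l v hv
  have h4 : Module.finrank k (Fin 4 → k) = 4 := by simp [Module.finrank_pi]
  have hkerdim : ∀ l, Module.finrank k (LinearMap.ker (φ l)) = 3 := by
    intro l
    have hrange : LinearMap.range (φ l) = ⊤ := by
      have hex : ∃ v, φ l v ≠ 0 := by
        by_contra hno
        push_neg at hno
        exact hφne l (LinearMap.ext fun v => by simpa using hno v)
      obtain ⟨v, hv⟩ := hex
      rw [Submodule.eq_top_iff']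
      intro x
      have : x = (x / φ l v) • φ l v := by rw [smul_eq_mul, div_mul_cancel₀ x hv]
      rw [this]
      exact Submodule.smul_mem _ _ (LinearMap.mem_range_self _ v)
    have hrk := LinearMap.finrank_range_add_finrank_ker (φ l)
    rw [hrange, finrank_top, h4] at hrk
    have : Module.finrank k k = 1 := Module.finrank_self k
    omega
  set W : Submodule k (Fin 4 → k) := LinearMap.ker (φ 0) ⊓ LinearMap.ker (φ 1) with hWdef
  have hWle : ∀ l, W ≤ LinearMap.ker (φ l) := by
    intro l v hv
    obtain ⟨hv0, hv1⟩ := Submodule.mem_inf.mp hv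
    rw [LinearMap.mem_ker] at hv0 hv1 ⊢
    fin_cases l
    · exact hv0
    · exact hv1
    · have := key v
      rw [hv0, hv1] at this
      simp only [mul_zero, zero_add] at this
      rcases mul_eq_zero.mp this with hh | hh
      · exact absurd hh hc2
      · exact hh
  have hwW : w ∈ W := Submodule.mem_inf.mpr ⟨LinearMap.mem_ker.mpr (hφw 0),
    LinearMap.mem_ker.mpr (hφw 1)⟩
  have hWge : 2 ≤ Module.finrank k W := by
    have hh := Submodule.finrank_sup_add_finrank_inf_eq
      (LinearMap.ker (φ 0)) (LinearMap.ker (φ 1))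
    have hle := Submodule.finrank_le (LinearMap.ker (φ 0) ⊔ LinearMap.ker (φ 1))
    rw [hkerdim 0, hkerdim 1] at hh
    rw [h4] at hle
    rw [hWdef]
    omega
  have hWdim : Module.finrank k W = 2 := by
    by_contra hne2
    have h3le : 3 ≤ Module.finrank k W := by omega
    have hW0 : W = LinearMap.ker (φ 0) :=
      Submodule.eq_of_le_of_finrank_le (hWle 0) (by rw [hkerdim 0]; omega)
    have hW1 : W = LinearMap.ker (φ 1) :=
      Submodule.eq_of_le_of_finrank_le (hWle 1) (by rw [hkerdim 1]; omega)
    have htop : V 0 ⊔ V 1 ≤ LinearMap.ker (φ 0) := by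
      apply sup_le (hVker 0)
      rw [← hW0, hW1]
      exact hVker 1
    rw [hsup 0 1 (by decide), top_le_iff] at htop
    have h3 := hkerdim 0
    rw [htop, finrank_top, h4] at h3
    omega
  -- nonzero vectors in W ⊓ V l
  have hWVl : ∀ l, ∃ u, u ∈ W ⊓ V l ∧ u ≠ 0 := by
    intro l
    have hsuple : W ⊔ V l ≤ LinearMap.ker (φ l) := sup_le (hWle l) (hVker l)
    have hsupfin : Module.finrank k (W ⊔ V l : Submodule k (Fin 4 → k)) ≤ 3 := by
      calc Module.finrank k (W ⊔ V l : Submodule k (Fin 4 → k))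
          ≤ Module.finrank k (LinearMap.ker (φ l)) := Submodule.finrank_mono hsuple
        _ = 3 := hkerdim l
    have hh := Submodule.finrank_sup_add_finrank_inf_eq W (V l)
    rw [hWdim, hVdim] at hh
    have hpos : 0 < Module.finrank k (W ⊓ V l : Submodule k (Fin 4 → k)) := by omega
    have hnb : (W ⊓ V l : Submodule k (Fin 4 → k)) ≠ ⊥ := by
      intro hb
      rw [hb, finrank_bot] at hpos
      omega
    obtain ⟨u, hu, hune⟩ := (Submodule.ne_bot_iff _).mp hnb
    exact ⟨u, hu, hune⟩
  obtain ⟨u0, hu0mem, hu0ne⟩ := hWVl 0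
  obtain ⟨u1, hu1mem, hu1ne⟩ := hWVl 1
  obtain ⟨u2, hu2mem, hu2ne⟩ := hWVl 2
  have hu0W : u0 ∈ W := (Submodule.mem_inf.mp hu0mem).1
  have hu0V : u0 ∈ V 0 := (Submodule.mem_inf.mp hu0mem).2
  have hu1W : u1 ∈ W := (Submodule.mem_inf.mp hu1mem).1
  have hu1V : u1 ∈ V 1 := (Submodule.mem_inf.mp hu1mem).2
  have hu2W : u2 ∈ W := (Submodule.mem_inf.mp hu2mem).1
  have hu2V : u2 ∈ V 2 := (Submodule.mem_inf.mp hu2mem).2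
  -- u0, u1 independent
  have hli01 : LinearIndependent k ![u0, u1] := by
    rw [LinearIndependent.pair_iff]
    intro s t hst
    have hs : s • u0 = -(t • u1) := eq_neg_of_add_eq_zero_left hst
    have hmem : s • u0 ∈ V 0 ⊓ V 1 := by
      refine Submodule.mem_inf.mpr ⟨Submodule.smul_mem _ _ hu0V, ?_⟩
      rw [hs]
      exact Submodule.neg_mem _ (Submodule.smul_mem _ _ hu1V)
    rw [hVdisj 0 1 (by decide)] at hmem
    have hs0 : s = 0 := by
      rcases smul_eq_zero.mp (Submodule.mem_bot k |>.mp hmem) with hh | hh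
      · exact hh
      · exact absurd hh hu0ne
    refine ⟨hs0, ?_⟩
    rw [hs0, zero_smul, zero_add] at hst
    rcases smul_eq_zero.mp hst with hh | hh
    · exact hh
    · exact absurd hh hu1ne
  have hrange01 : Set.range ![u0, u1] = {u0, u1} :=
    Matrix.range_cons_cons_empty u0 u1 ![]
  have hspanW : Submodule.span k {u0, u1} = W := by
    apply Submodule.eq_of_le_of_finrank_le
    · rw [Submodule.span_le]
      intro x hx
      simp only [Set.mem_insert_iff, Set.mem_singleton_iff] at hx
      rcases hx with rfl | rfl
      · exact hu0W
      · exact hu1W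
    · rw [hWdim, ← hrange01, finrank_span_eq_card hli01]
      simp
  have hwspan : w ∈ Submodule.span k {u0, u1} := by rw [hspanW]; exact hwW
  have hu2span : u2 ∈ Submodule.span k {u0, u1} := by rw [hspanW]; exact hu2W
  obtain ⟨s, t, hst⟩ := Submodule.mem_span_pair.mp hwspan
  obtain ⟨α, β, hαβ⟩ := Submodule.mem_span_pair.mp hu2span
  have hαne : α ≠ 0 := by
    intro h0
    rw [h0, zero_smul, zero_add] at hαβ
    have : u2 ∈ V 1 ⊓ V 2 := Submodule.mem_inf.mpr
      ⟨hαβ ▸ Submodule.smul_mem _ _ hu1V, hu2V⟩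
    rw [hVdisj 1 2 (by decide)] at this
    exact hu2ne (Submodule.mem_bot k |>.mp this)
  have hβne : β ≠ 0 := by
    intro h0
    rw [h0, zero_smul, add_zero] at hαβ
    have : u2 ∈ V 0 ⊓ V 2 := Submodule.mem_inf.mpr
      ⟨hαβ ▸ Submodule.smul_mem _ _ hu0V, hu2V⟩
    rw [hVdisj 0 2 (by decide)] at this
    exact hu2ne (Submodule.mem_bot k |>.mp this)
  obtain ⟨q, hqhom, hqne, hq0, hq1, hq2, hqw⟩ := exists_quadric (V 0) (V 1) (V 2)
    (hVdim 0) (hVdim 1) (hVdim 2) (hVdisj 0 1 (by decide))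
    u0 u1 u2 hu0V hu1V hu2V α β hαne hβne hαβ.symm w s t hst.symm
  exact hquad q hqhom hqne
    (fun p => by fin_cases p <;> [exact hq0; exact hq1; exact hq2]) hqw
end

section
/- Let V₁, V₂, V₃ ⊆ k⁴ be 2-dimensional linear subspaces with V_i ∩ V_j = {0} for i ≠ j, and let w₀, w₁, w₂, w₃ ∈ k⁴ be nonzero vectors that span k⁴. Assume that for each l ∈ {1,2,3}, the only homogeneous polynomial of degree 2 vanishing on both subspaces V_p with p ≠ l and at all four vectors w₀, …, w₃ is the zero polynomial. Then for each l ∈ {1,2,3} and each i ∈ {0,1,2,3} there exists a homogeneous polynomial q of degree 2 vanishing on both subspaces V_p with p ≠ l and at the three vectors w_j with j ≠ i, and satisfying q(w_i) ≠ 0 (a quadric surface containing the two lines L_p, p ≠ l, and the three points P_j, j ≠ i, but not the point P_i). -/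
open MvPolynomial

private def expv10 : Fin 10 → (Fin 4 → ℕ) :=
  ![![2,0,0,0],![1,1,0,0],![1,0,1,0],![1,0,0,1],![0,2,0,0],
    ![0,1,1,0],![0,1,0,1],![0,0,2,0],![0,0,1,1],![0,0,0,2]]

private noncomputable def e10 : Fin 10 → (Fin 4 →₀ ℕ) :=
  fun j => Finsupp.equivFunOnFinite.symm (expv10 j)

private noncomputable def m2 : Fin 3 → (Fin 2 →₀ ℕ) :=
  fun s => Finsupp.equivFunOnFinite.symm (![![2,0],![1,1],![0,2]] s)

private lemma e10_inj : Function.Injective e10 :=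
  Finsupp.equivFunOnFinite.symm.injective.comp (by decide : Function.Injective expv10)

private lemma deg4 (d : Fin 4 →₀ ℕ) : Finsupp.degree d = d 0 + d 1 + d 2 + d 3 := by
  rw [Finsupp.degree_apply, Finset.sum_subset (Finset.subset_univ _)]
  · simp [Fin.sum_univ_four]
  · intro x _ hx; simpa using Finsupp.notMem_support_iff.mp hx

private lemma deg2' (d : Fin 2 →₀ ℕ) : Finsupp.degree d = d 0 + d 1 := by
  rw [Finsupp.degree_apply, Finset.sum_subset (Finset.subset_univ _)]
  · simp [Fin.sum_univ_two]
  · intro x _ hx; simpa using Finsupp.notMem_support_iff.mp hx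

private lemma e10_deg : ∀ j, Finsupp.degree (e10 j) = 2 := by
  intro j
  rw [deg4]
  show expv10 j 0 + expv10 j 1 + expv10 j 2 + expv10 j 3 = 2
  revert j; decide

private lemma fin2_deg_two (d : Fin 2 →₀ ℕ) (h : Finsupp.degree d = 2) :
    d = m2 0 ∨ d = m2 1 ∨ d = m2 2 := by
  rw [deg2'] at h
  have h0 : d 0 = 0 ∨ d 0 = 1 ∨ d 0 = 2 := by omega
  have key : ∀ s : Fin 3, (∀ t : Fin 2, d t = ![![2,0],![1,1],![0,2]] s t) → d = m2 s := by
    intro s hs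
    ext t
    rw [hs t]
    show _ = Finsupp.equivFunOnFinite.symm _ t
    simp
  rcases h0 with h0 | h0 | h0
  · right; right; exact key 2 (by intro t; fin_cases t <;> simp <;> omega)
  · right; left; exact key 1 (by intro t; fin_cases t <;> simp <;> omega)
  · left; exact key 0 (by intro t; fin_cases t <;> simp <;> omega)

private lemma eval_aeval' {k : Type*} [CommRing k] (u : Fin 2 → k)
    (f : Fin 4 → MvPolynomial (Fin 2) k) (q : MvPolynomial (Fin 4) k) :
    eval u (aeval f q) = eval (fun t => eval u (f t)) q := by
  rw [aeval_def, eval_eval₂]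
  congr 1
  ext a : 2
  simp

private lemma fin3_cases : ∀ p l : Fin 3, p ≠ l → p = l + 1 ∨ p = l + 2 := by decide

private lemma fin4_cases : ∀ j i : Fin 4, j ≠ i → j = i + 1 ∨ j = i + 2 ∨ j = i + 3 := by decide

/-- Under the independence hypothesis, for each line `L_l` and each point `P_i`
there is a quadric through the two lines `L_p`, `p ≠ l`, and the three points
`P_j`, `j ≠ i`, missing `P_i`. -/
theorem stmt_8 {k : Type*} [Field k] [IsAlgClosed k] [CharZero k]
    (V : Fin 3 → Submodule k (Fin 4 → k))
    (hVdim : ∀ p, Module.finrank k (V p) = 2)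
    (hVdisj : ∀ p q : Fin 3, p ≠ q → V p ⊓ V q = ⊥)
    (w : Fin 4 → (Fin 4 → k))
    (hw0 : ∀ i, w i ≠ 0)
    (hwspan : Submodule.span k (Set.range w) = ⊤)
    (hres : ∀ l : Fin 3, ∀ q : MvPolynomial (Fin 4) k, q.IsHomogeneous 2 →
      (∀ p : Fin 3, p ≠ l → ∀ v ∈ V p, eval v q = 0) →
      (∀ i, eval (w i) q = 0) → q = 0) :
    ∀ (l : Fin 3) (i : Fin 4), ∃ q : MvPolynomial (Fin 4) k, q.IsHomogeneous 2 ∧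
      (∀ p : Fin 3, p ≠ l → ∀ v ∈ V p, eval v q = 0) ∧
      (∀ j : Fin 4, j ≠ i → eval (w j) q = 0) ∧ eval (w i) q ≠ 0 := by
  intro l i
  -- bases for the planes
  let B : ∀ p : Fin 3, Module.Basis (Fin 2) k (V p) :=
    fun p => Module.finBasisOfFinrankEq k (V p) (hVdim p)
  let b : Fin 3 → Fin 2 → (Fin 4 → k) := fun p t => (B p t : Fin 4 → k)
  -- substitution onto the plane V p
  let g : Fin 3 → Fin 4 → MvPolynomial (Fin 2) k :=
    fun p t => C (b p 0 t) * X 0 + C (b p 1 t) * X 1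
  let ψ : ∀ _ : Fin 3, MvPolynomial (Fin 4) k →ₐ[k] MvPolynomial (Fin 2) k :=
    fun p => aeval (g p)
  -- nine linear conditions (plus a zero row)
  let F : Fin 10 → (MvPolynomial (Fin 4) k →ₗ[k] k) :=
    ![lcoeff k (m2 0) ∘ₗ (ψ (l+1)).toLinearMap,
      lcoeff k (m2 1) ∘ₗ (ψ (l+1)).toLinearMap,
      lcoeff k (m2 2) ∘ₗ (ψ (l+1)).toLinearMap,
      lcoeff k (m2 0) ∘ₗ (ψ (l+2)).toLinearMap,
      lcoeff k (m2 1) ∘ₗ (ψ (l+2)).toLinearMap,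
      lcoeff k (m2 2) ∘ₗ (ψ (l+2)).toLinearMap,
      (aeval (w (i+1)) : MvPolynomial (Fin 4) k →ₐ[k] k).toLinearMap,
      (aeval (w (i+2)) : MvPolynomial (Fin 4) k →ₐ[k] k).toLinearMap,
      (aeval (w (i+3)) : MvPolynomial (Fin 4) k →ₐ[k] k).toLinearMap,
      0]
  let mon : Fin 10 → MvPolynomial (Fin 4) k := fun j => monomial (e10 j) 1
  let A : Matrix (Fin 10) (Fin 10) k := Matrix.of fun r c => F r (mon c)
  have hdet : A.det = 0 := by
    apply Matrix.det_eq_zero_of_row_eq_zero 9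
    intro j
    show F 9 (mon j) = 0
    show (0 : MvPolynomial (Fin 4) k →ₗ[k] k) (mon j) = 0
    simp
  obtain ⟨c, hc0, hAc⟩ := Matrix.exists_mulVec_eq_zero_iff.mpr hdet
  -- the quadric
  set q : MvPolynomial (Fin 4) k := ∑ j : Fin 10, c j • mon j with hq_def
  have hFq : ∀ r, F r q = 0 := by
    intro r
    have : F r q = ∑ j : Fin 10, A r j * c j := by
      rw [hq_def, map_sum]
      congr 1; ext j
      rw [map_smul]
      simp [A, mul_comm, smul_eq_mul]
    rw [this]
    have := congrFun hAc r
    simpa [Matrix.mulVec, dotProduct] using this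
  have hmon_homog : ∀ j, (mon j).IsHomogeneous 2 := fun j =>
    isHomogeneous_monomial _ (e10_deg j)
  have hq_homog : q.IsHomogeneous 2 := by
    rw [hq_def]
    apply MvPolynomial.IsHomogeneous.sum
    intro j _
    rw [smul_eq_C_mul]
    exact (hmon_homog j).C_mul _
  -- q ≠ 0
  have hqne : q ≠ 0 := by
    obtain ⟨j₀, hj₀⟩ := Function.ne_iff.mp hc0
    intro hq0
    apply hj₀
    have : coeff (e10 j₀) q = c j₀ := by
      rw [hq_def, MvPolynomial.coeff_sum]
      rw [Finset.sum_eq_single j₀]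
      · simp [mon, coeff_smul, coeff_monomial]
      · intro j _ hj
        rw [coeff_smul, coeff_monomial, if_neg (fun h => hj (e10_inj h)), smul_zero]
      · simp
    rw [hq0] at this
    simpa using this.symm
  -- the substituted polynomials vanish
  have hψ : ∀ p : Fin 3, p = l + 1 ∨ p = l + 2 → ψ p q = 0 := by
    intro p hp
    have hψhom : (ψ p q).IsHomogeneous 2 := by
      have : ∀ t, (g p t).IsHomogeneous 1 := fun t =>
        (isHomogeneous_C_mul_X _ _).add (isHomogeneous_C_mul_X _ _)
      simpa [ψ, aeval_eq_bind₁] using hq_homog.aeval (g p) this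
    have hco : ∀ s : Fin 3, coeff (m2 s) (ψ p q) = 0 := by
      intro s
      rcases hp with hp | hp <;> subst hp <;> fin_cases s
      · exact hFq 0
      · exact hFq 1
      · exact hFq 2
      · exact hFq 3
      · exact hFq 4
      · exact hFq 5
    ext d
    rw [coeff_zero]
    by_cases hd : Finsupp.degree d = 2
    · rcases fin2_deg_two d hd with h | h | h <;> rw [h] <;> exact hco _
    · exact hψhom.coeff_eq_zero hd
  -- vanishing on the planes
  have hline : ∀ p : Fin 3, p ≠ l → ∀ v ∈ V p, eval v q = 0 := by
    intro p hp v hv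
    have hp' : p = l + 1 ∨ p = l + 2 := fin3_cases p l hp
    have hrepr : v = (B p).repr ⟨v, hv⟩ 0 • b p 0 + (B p).repr ⟨v, hv⟩ 1 • b p 1 := by
      have := (B p).sum_repr ⟨v, hv⟩
      rw [Fin.sum_univ_two] at this
      have := congrArg (Subtype.val) this
      simp only [Submodule.coe_add, SetLike.val_smul] at this
      exact this.symm
    set x := (B p).repr ⟨v, hv⟩ 0
    set y := (B p).repr ⟨v, hv⟩ 1
    have : eval v q = eval ![x, y] (ψ p q) := by
      show eval v q = eval ![x, y] (aeval (g p) q)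
      rw [eval_aeval']
      have hfun : (fun t => eval ![x, y] (g p t)) = v := by
        funext t
        rw [hrepr]
        simp [g]
        ring
      rw [hfun]
    rw [this, hψ p hp', map_zero]
  -- vanishing at the three other points
  have haee : ∀ (u : Fin 4 → k) (qq : MvPolynomial (Fin 4) k),
      (aeval u : MvPolynomial (Fin 4) k →ₐ[k] k) qq = eval u qq := by
    intro u qq; simp [aeval_def]
  have hpts : ∀ j : Fin 4, j ≠ i → eval (w j) q = 0 := by
    intro j hj
    have hj' : j = i + 1 ∨ j = i + 2 ∨ j = i + 3 := fin4_cases j i hj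
    rcases hj' with h | h | h <;> subst h <;> rw [← haee]
    · exact hFq 6
    · exact hFq 7
    · exact hFq 8
  refine ⟨q, hq_homog, hline, hpts, ?_⟩
  intro hwi
  apply hqne
  apply hres l q hq_homog hline
  intro j
  by_cases hj : j = i
  · rw [hj]; exact hwi
  · exact hpts j hj
end

section
/- Let V₁, V₂ ⊆ k⁴ be 2-dimensional linear subspaces with V₁ ∩ V₂ = {0} (two disjoint lines in ℙ³). Then the k-vector space of homogeneous polynomials of degree 2 in k[x₀, x₁, x₂, x₃] vanishing on V₁ ∪ V₂ has dimension exactly 4 (i.e., h⁰(I_{L₁∪L₂}(2)) = 4). -/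
open MvPolynomial

namespace Stmt9
variable {k : Type*} [Field k]

lemma degree_four (m : Fin 4 →₀ ℕ) : m.degree = m 0 + m 1 + m 2 + m 3 := by
  rw [Finsupp.degree_apply, Finset.sum_subset (Finset.subset_univ _)
    (by intro i _ hi; simpa using hi), Fin.sum_univ_four]

lemma degree_two_of (f : MvPolynomial (Fin 4) k) (hf : f.IsHomogeneous 2)
    {m : Fin 4 →₀ ℕ} (hm : coeff m f ≠ 0) : m 0 + m 1 + m 2 + m 3 = 2 := by
  have := hf hm
  rw [show (Finsupp.weight 1 : (Fin 4 →₀ ℕ) →+ ℕ) = Finsupp.weight (fun _ => 1) from rfl,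
    ← Finsupp.degree_eq_weight_one, degree_four] at this
  exact this

lemma mk_single {m : Fin 4 →₀ ℕ} {i : Fin 4} (hi : m i = 2)
    (h0 : ∀ l, l ≠ i → m l = 0) : m = Finsupp.single i 2 := by
  ext l
  rcases eq_or_ne l i with rfl | hne2
  · simp [hi]
  · rw [h0 l hne2, Finsupp.single_apply, if_neg (Ne.symm hne2)]

lemma mk_pair {m : Fin 4 →₀ ℕ} {i j : Fin 4} (hij : i ≠ j) (hi : m i = 1) (hj : m j = 1)
    (h0 : ∀ l, l ≠ i → l ≠ j → m l = 0) :
    m = Finsupp.single i 1 + Finsupp.single j 1 := by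
  ext l
  rcases eq_or_ne l i with rfl | h1
  · simp [Finsupp.single_apply, hij, Ne.symm hij, hi]
  rcases eq_or_ne l j with rfl | h2
  · simp [Finsupp.single_apply, hij, hj]
  · rw [h0 l h1 h2]
    simp [Finsupp.single_apply, Ne.symm h1, Ne.symm h2]

lemma single_of_supp {m : Fin 4 →₀ ℕ} {i : Fin 4} (hd : m 0 + m 1 + m 2 + m 3 = 2)
    (h0 : ∀ l, l ≠ i → m l = 0) : m = Finsupp.single i 2 := by
  have key : m i = 2 := by
    fin_cases i
    · rw [h0 1 (by decide), h0 2 (by decide), h0 3 (by decide)] at hd; show m 0 = 2; omega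
    · rw [h0 0 (by decide), h0 2 (by decide), h0 3 (by decide)] at hd; show m 1 = 2; omega
    · rw [h0 0 (by decide), h0 1 (by decide), h0 3 (by decide)] at hd; show m 2 = 2; omega
    · rw [h0 0 (by decide), h0 1 (by decide), h0 2 (by decide)] at hd; show m 3 = 2; omega
  ext l
  rcases eq_or_ne l i with rfl | hne2
  · simp [key]
  · rw [h0 l hne2, Finsupp.single_apply, if_neg (Ne.symm hne2)]

lemma eval_single (f : MvPolynomial (Fin 4) k) (hf : f.IsHomogeneous 2) (i : Fin 4) :
    eval (fun l => if l = i then (1:k) else 0) f = coeff (Finsupp.single i 2) f := by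
  rw [eval_eq']
  rw [Finset.sum_eq_single (Finsupp.single i 2)]
  · rw [Finset.prod_eq_one, mul_one]
    intro l _
    rcases eq_or_ne l i with rfl | h
    · simp
    · rw [Finsupp.single_apply, if_neg (Ne.symm h), pow_zero]
  · intro m hm hne
    rw [mem_support_iff] at hm
    obtain ⟨l, hl, hli⟩ : ∃ l, m l ≠ 0 ∧ l ≠ i := by
      by_contra h
      push_neg at h
      exact hne (single_of_supp (degree_two_of f hf hm) fun l hli => by
        by_contra hc; exact hli (h l hc))
    rw [Finset.prod_eq_zero (Finset.mem_univ l), mul_zero]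
    simp [hli, hl]
  · intro h
    rw [notMem_support_iff] at h
    simp [h]

lemma pair_of_supp {m : Fin 4 →₀ ℕ} {i j : Fin 4} (hij : i ≠ j)
    (hd : m.degree = 2) (h0 : ∀ l, l ≠ i → l ≠ j → m l = 0) :
    m = Finsupp.single i 2 ∨ m = Finsupp.single i 1 + Finsupp.single j 1 ∨
      m = Finsupp.single j 2 := by
  have hsub : m.support ⊆ {i, j} := by
    intro l hl
    rw [Finsupp.mem_support_iff] at hl
    by_contra hmem
    simp only [Finset.mem_insert, Finset.mem_singleton, not_or] at hmem
    exact hl (h0 l hmem.1 hmem.2)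
  have hmij : m i + m j = 2 := by
    calc m i + m j = ∑ l ∈ ({i, j} : Finset (Fin 4)), m l := (Finset.sum_pair hij).symm
    _ = m.degree := (Finset.sum_subset hsub (fun l _ hl => by
        rwa [← Finsupp.notMem_support_iff])).symm
    _ = 2 := hd
  have hcase : (m i = 2 ∧ m j = 0) ∨ (m i = 1 ∧ m j = 1) ∨ (m i = 0 ∧ m j = 2) := by omega
  rcases hcase with ⟨ha, hb⟩ | ⟨ha, hb⟩ | ⟨ha, hb⟩
  · left
    ext l
    rcases eq_or_ne l i with rfl | h1
    · simpa using ha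
    rcases eq_or_ne l j with rfl | h2
    · rw [hb, Finsupp.single_apply, if_neg (fun h => hij h)]
    · rw [h0 l h1 h2, Finsupp.single_apply, if_neg (Ne.symm h1)]
  · right; left
    ext l
    rcases eq_or_ne l i with rfl | h1
    · simp [Finsupp.single_apply, hij, Ne.symm hij, ha]
    rcases eq_or_ne l j with rfl | h2
    · simp [Finsupp.single_apply, hij, hb]
    · rw [h0 l h1 h2]
      simp [Finsupp.single_apply, Ne.symm h1, Ne.symm h2]
  · right; right
    ext l
    rcases eq_or_ne l j with rfl | h1
    · simpa using hb
    rcases eq_or_ne l i with rfl | h2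
    · rw [ha, Finsupp.single_apply, if_neg (fun h => hij h.symm)]
    · rw [h0 l h2 h1, Finsupp.single_apply, if_neg (Ne.symm h1)]

lemma eval_pair (f : MvPolynomial (Fin 4) k) (hf : f.IsHomogeneous 2) (i j : Fin 4)
    (hij : i ≠ j) :
    eval (fun l => if l = i ∨ l = j then (1:k) else 0) f =
      coeff (Finsupp.single i 2) f + coeff (Finsupp.single i 1 + Finsupp.single j 1) f +
        coeff (Finsupp.single j 2) f := by
  set v : Fin 4 → k := fun l => if l = i ∨ l = j then 1 else 0 with hv
  set t : (Fin 4 →₀ ℕ) → k := fun m => coeff m f * ∏ l, v l ^ m l with ht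
  have hprod : ∀ m : Fin 4 →₀ ℕ, (∀ l, l ≠ i → l ≠ j → m l = 0) →
      (∏ l, v l ^ m l) = 1 := by
    intro m hm
    apply Finset.prod_eq_one
    intro l _
    by_cases h1 : l = i ∨ l = j
    · rw [hv]; simp only [if_pos h1, one_pow]
    · push_neg at h1
      rw [hm l h1.1 h1.2, pow_zero]
  have d1 : (Finsupp.single i 2 : Fin 4 →₀ ℕ) ≠ Finsupp.single i 1 + Finsupp.single j 1 := by
    intro h
    have := DFunLike.congr_fun h j
    simp [Finsupp.single_apply, hij] at this
  have d2 : (Finsupp.single i 2 : Fin 4 →₀ ℕ) ≠ Finsupp.single j 2 := by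
    intro h
    have := DFunLike.congr_fun h i
    simp [Finsupp.single_apply, Ne.symm hij] at this
  have d3 : (Finsupp.single i 1 + Finsupp.single j 1 : Fin 4 →₀ ℕ) ≠ Finsupp.single j 2 := by
    intro h
    have := DFunLike.congr_fun h i
    simp [Finsupp.single_apply, Ne.symm hij] at this
  set A : Finset (Fin 4 →₀ ℕ) :=
    {Finsupp.single i 2, Finsupp.single i 1 + Finsupp.single j 1, Finsupp.single j 2} with hA
  have h1 : ∑ m ∈ f.support, t m = ∑ m ∈ f.support ∪ A, t m :=
    Finset.sum_subset Finset.subset_union_left (fun m _ hm => by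
      rw [ht]
      simp only [notMem_support_iff.mp hm, zero_mul])
  have h2 : ∑ m ∈ A, t m = ∑ m ∈ f.support ∪ A, t m := by
    refine Finset.sum_subset Finset.subset_union_right (fun m hmu hm => ?_)
    have hms : m ∈ f.support := (Finset.mem_union.mp hmu).resolve_right hm
    rw [mem_support_iff] at hms
    obtain ⟨l, hl, hli, hlj⟩ : ∃ l, m l ≠ 0 ∧ l ≠ i ∧ l ≠ j := by
      by_contra h
      push_neg at h
      have hdm : m.degree = 2 := by
        rw [degree_four]
        have := hf hms
        rwa [show (Finsupp.weight 1 : (Fin 4 →₀ ℕ) →+ ℕ) = Finsupp.weight (fun _ => 1) from rfl,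
          ← Finsupp.degree_eq_weight_one, degree_four] at this
      refine hm ?_
      rcases pair_of_supp hij hdm (fun l h1 h2 => by
        by_contra hc; exact absurd (h l hc) (by simp [h1, h2])) with h | h | h <;>
        simp [hA, h]
    rw [ht]
    simp only
    rw [Finset.prod_eq_zero (Finset.mem_univ l), mul_zero]
    rw [hv]
    simp only [hli, hlj, or_self, if_false]
    exact zero_pow hl
  rw [eval_eq', h1, ← h2, hA]
  rw [Finset.sum_insert (by simp [d1, d2]), Finset.sum_insert (by simp [d3]),
    Finset.sum_singleton]
  rw [ht]
  simp only
  rw [hprod _ (fun l h1 h2 => by simp [Finsupp.single_apply, Ne.symm h1]),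
    hprod _ (fun l h1 h2 => by simp [Finsupp.single_apply, Ne.symm h1, Ne.symm h2]),
    hprod _ (fun l h1 h2 => by simp [Finsupp.single_apply, Ne.symm h2]),
    mul_one, mul_one, mul_one]
  ring

def S1 : Set (Fin 4 → k) := {v | v 2 = 0 ∧ v 3 = 0}
def S2 : Set (Fin 4 → k) := {v | v 0 = 0 ∧ v 1 = 0}

noncomputable def dfun : Fin 4 → (Fin 4 →₀ ℕ) :=
  ![Finsupp.single 0 1 + Finsupp.single 2 1, Finsupp.single 0 1 + Finsupp.single 3 1,
    Finsupp.single 1 1 + Finsupp.single 2 1, Finsupp.single 1 1 + Finsupp.single 3 1]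

noncomputable def gmon : Fin 4 → MvPolynomial (Fin 4) k := fun a => monomial (dfun a) 1

lemma dfun_inj : Function.Injective (dfun) := by
  intro a b h
  fin_cases a <;> fin_cases b <;>
    first
      | rfl
      | (exfalso
         have h' := congrArg (fun m => (m 0, m 1, m 2, m 3)) h
         simp [dfun, Finsupp.single_apply] at h')

lemma gmon_li : LinearIndependent k (gmon (k := k)) := by
  have h := (basisMonomials (Fin 4) k).linearIndependent.comp dfun dfun_inj
  have : gmon (k := k) = ⇑(basisMonomials (Fin 4) k) ∘ dfun := by
    funext a
    simp [gmon, coe_basisMonomials, Function.comp]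
  rwa [this]

lemma mem_span_gmon {m : Fin 4 →₀ ℕ} (c : k) (a : Fin 4) (hm : m = dfun a) :
    monomial m c ∈ Submodule.span k (Set.range (gmon (k := k))) := by
  have : monomial m c = c • gmon (k := k) a := by
    rw [gmon, smul_monomial, smul_eq_mul, mul_one, hm]
  rw [this]
  exact Submodule.smul_mem _ _ (Submodule.subset_span ⟨a, rfl⟩)

lemma X_mul_X' (i j : Fin 4) : (X i * X j : MvPolynomial (Fin 4) k)
    = monomial (Finsupp.single i 1 + Finsupp.single j 1) 1 := by
  rw [X, X, monomial_mul, one_mul]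

lemma aux_mem (i j : Fin 4) (hi : i = 0 ∨ i = 1) (hj : j = 2 ∨ j = 3) :
    (monomial (Finsupp.single i 1 + Finsupp.single j 1) (1:k)) ∈
      homogeneousSubmodule (Fin 4) k 2 ⊓ vanishingSubmodule ((S1 : Set (Fin 4 → k)) ∪ S2) := by
  refine Submodule.mem_inf.mpr ⟨?_, ?_⟩
  · rw [mem_homogeneousSubmodule]
    apply isHomogeneous_monomial
    rw [degree_four]
    rcases hi with rfl|rfl <;> rcases hj with rfl|rfl <;> simp [Finsupp.single_apply]
  · intro v hv
    have he : eval v (monomial (Finsupp.single i 1 + Finsupp.single j 1) (1:k)) = v i * v j := by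
      rw [← X_mul_X']; simp
    rw [he]
    rcases hv with ⟨h2, h3⟩ | ⟨h0, h1⟩
    · rcases hj with rfl|rfl
      · rw [h2, mul_zero]
      · rw [h3, mul_zero]
    · rcases hi with rfl|rfl
      · rw [h0, zero_mul]
      · rw [h1, zero_mul]

lemma std_eq_span :
    homogeneousSubmodule (Fin 4) k 2 ⊓ vanishingSubmodule ((S1 : Set (Fin 4 → k)) ∪ S2)
      = Submodule.span k (Set.range (gmon (k := k))) := by
  apply le_antisymm
  · rintro f hf
    obtain ⟨hhom, hvan⟩ := Submodule.mem_inf.mp hf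
    rw [mem_homogeneousSubmodule] at hhom
    have p0 : (fun l : Fin 4 => if l = 0 then (1:k) else 0) ∈ S1 ∪ S2 :=
      Or.inl ⟨if_neg (by decide), if_neg (by decide)⟩
    have p1 : (fun l : Fin 4 => if l = 1 then (1:k) else 0) ∈ S1 ∪ S2 :=
      Or.inl ⟨if_neg (by decide), if_neg (by decide)⟩
    have p2 : (fun l : Fin 4 => if l = 2 then (1:k) else 0) ∈ S1 ∪ S2 :=
      Or.inr ⟨if_neg (by decide), if_neg (by decide)⟩
    have p3 : (fun l : Fin 4 => if l = 3 then (1:k) else 0) ∈ S1 ∪ S2 :=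
      Or.inr ⟨if_neg (by decide), if_neg (by decide)⟩
    have p01 : (fun l : Fin 4 => if l = 0 ∨ l = 1 then (1:k) else 0) ∈ S1 ∪ S2 :=
      Or.inl ⟨if_neg (by decide), if_neg (by decide)⟩
    have p23 : (fun l : Fin 4 => if l = 2 ∨ l = 3 then (1:k) else 0) ∈ S1 ∪ S2 :=
      Or.inr ⟨if_neg (by decide), if_neg (by decide)⟩
    have c0 : coeff (Finsupp.single 0 2) f = 0 := by
      rw [← eval_single f hhom 0]; exact hvan _ p0
    have c1 : coeff (Finsupp.single 1 2) f = 0 := by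
      rw [← eval_single f hhom 1]; exact hvan _ p1
    have c2 : coeff (Finsupp.single 2 2) f = 0 := by
      rw [← eval_single f hhom 2]; exact hvan _ p2
    have c3 : coeff (Finsupp.single 3 2) f = 0 := by
      rw [← eval_single f hhom 3]; exact hvan _ p3
    have c01 : coeff (Finsupp.single 0 1 + Finsupp.single 1 1) f = 0 := by
      have h := eval_pair f hhom 0 1 (by decide)
      rw [hvan _ p01, c0, c1] at h
      simpa using h.symm
    have c23 : coeff (Finsupp.single 2 1 + Finsupp.single 3 1) f = 0 := by
      have h := eval_pair f hhom 2 3 (by decide)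
      rw [hvan _ p23, c2, c3] at h
      simpa using h.symm
    nth_rewrite 1 [f.as_sum]
    apply Submodule.sum_mem
    intro m hm
    have hmc := mem_support_iff.mp hm
    have hd := degree_two_of f hhom hmc
    by_cases hA : m 2 = 0 ∧ m 3 = 0
    · exfalso
      obtain ⟨ha2, ha3⟩ := hA
      rcases (by omega : (m 0 = 2 ∧ m 1 = 0) ∨ (m 0 = 1 ∧ m 1 = 1) ∨ (m 0 = 0 ∧ m 1 = 2))
        with ⟨h1, h2⟩ | ⟨h1, h2⟩ | ⟨h1, h2⟩
      · exact hmc (by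
          rw [mk_single h1 (fun l hl => by fin_cases l; exacts [absurd rfl hl, h2, ha2, ha3])]
          exact c0)
      · exact hmc (by
          rw [mk_pair (by decide) h1 h2
            (fun l hl1 hl2 => by fin_cases l; exacts [absurd rfl hl1, absurd rfl hl2, ha2, ha3])]
          exact c01)
      · exact hmc (by
          rw [mk_single h2 (fun l hl => by fin_cases l; exacts [h1, absurd rfl hl, ha2, ha3])]
          exact c1)
    by_cases hB : m 0 = 0 ∧ m 1 = 0
    · exfalso
      obtain ⟨hb0, hb1⟩ := hB
      rcases (by omega : (m 2 = 2 ∧ m 3 = 0) ∨ (m 2 = 1 ∧ m 3 = 1) ∨ (m 2 = 0 ∧ m 3 = 2))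
        with ⟨h1, h2⟩ | ⟨h1, h2⟩ | ⟨h1, h2⟩
      · exact hmc (by
          rw [mk_single h1 (fun l hl => by fin_cases l; exacts [hb0, hb1, absurd rfl hl, h2])]
          exact c2)
      · exact hmc (by
          rw [mk_pair (by decide) h1 h2
            (fun l hl1 hl2 => by fin_cases l; exacts [hb0, hb1, absurd rfl hl1, absurd rfl hl2])]
          exact c23)
      · exact hmc (by
          rw [mk_single h2 (fun l hl => by fin_cases l; exacts [hb0, hb1, h1, absurd rfl hl])]
          exact c3)
    · push_neg at hA hB
      have hsplit : (m 0 = 1 ∧ m 1 = 0 ∨ m 0 = 0 ∧ m 1 = 1) ∧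
          (m 2 = 1 ∧ m 3 = 0 ∨ m 2 = 0 ∧ m 3 = 1) := by
        rcases Nat.eq_zero_or_pos (m 2) with h2 | h2
        · rcases Nat.eq_zero_or_pos (m 0) with h0 | h0 <;> omega
        · rcases Nat.eq_zero_or_pos (m 0) with h0 | h0 <;> omega
      obtain ⟨hx, hy⟩ := hsplit
      rcases hx with ⟨h0, h1⟩ | ⟨h0, h1⟩ <;> rcases hy with ⟨h2, h3⟩ | ⟨h2, h3⟩
      · exact mem_span_gmon _ 0 (mk_pair (by decide) h0 h2
          (fun l hl1 hl2 => by fin_cases l; exacts [absurd rfl hl1, h1, absurd rfl hl2, h3]))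
      · exact mem_span_gmon _ 1 (mk_pair (by decide) h0 h3
          (fun l hl1 hl2 => by fin_cases l; exacts [absurd rfl hl1, h1, h2, absurd rfl hl2]))
      · exact mem_span_gmon _ 2 (mk_pair (by decide) h1 h2
          (fun l hl1 hl2 => by fin_cases l; exacts [h0, absurd rfl hl1, absurd rfl hl2, h3]))
      · exact mem_span_gmon _ 3 (mk_pair (by decide) h1 h3
          (fun l hl1 hl2 => by fin_cases l; exacts [h0, absurd rfl hl1, h2, absurd rfl hl2]))
  · rw [Submodule.span_le]
    rintro _ ⟨a, rfl⟩
    fin_cases a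
    · exact aux_mem 0 2 (Or.inl rfl) (Or.inl rfl)
    · exact aux_mem 0 3 (Or.inl rfl) (Or.inr rfl)
    · exact aux_mem 1 2 (Or.inr rfl) (Or.inl rfl)
    · exact aux_mem 1 3 (Or.inr rfl) (Or.inr rfl)

lemma std_finrank :
    Module.finrank k ↥(homogeneousSubmodule (Fin 4) k 2 ⊓
      vanishingSubmodule ((S1 : Set (Fin 4 → k)) ∪ S2)) = 4 := by
  rw [std_eq_span, finrank_span_eq_card gmon_li, Fintype.card_fin]

end Stmt9

/-- For two disjoint lines `L₁, L₂` in `ℙ³`, `h⁰(I_{L₁∪L₂}(2)) = 4`. -/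
theorem stmt_9 {k : Type*} [Field k] [IsAlgClosed k] [CharZero k]
    (V₁ V₂ : Submodule k (Fin 4 → k))
    (h1 : Module.finrank k V₁ = 2)
    (h2 : Module.finrank k V₂ = 2)
    (hdisj : V₁ ⊓ V₂ = ⊥) :
    Module.finrank k
      ↥(homogeneousSubmodule (Fin 4) k 2 ⊓
        vanishingSubmodule ((V₁ : Set (Fin 4 → k)) ∪ (V₂ : Set (Fin 4 → k)))) = 4 := by
  classical
  have hV12 : Disjoint V₁ V₂ := disjoint_iff.mpr hdisj
  set B1 := Module.finBasisOfFinrankEq k V₁ h1 with hB1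
  set B2 := Module.finBasisOfFinrankEq k V₂ h2 with hB2
  set f1 : Fin 2 → (Fin 4 → k) := V₁.subtype ∘ B1 with hf1
  set f2 : Fin 2 → (Fin 4 → k) := V₂.subtype ∘ B2 with hf2
  have hsp1 : Submodule.span k (Set.range f1) = V₁ := by
    rw [hf1, Set.range_comp, ← Submodule.map_span, Module.Basis.span_eq, Submodule.map_subtype_top]
  have hsp2 : Submodule.span k (Set.range f2) = V₂ := by
    rw [hf2, Set.range_comp, ← Submodule.map_span, Module.Basis.span_eq, Submodule.map_subtype_top]
  have li1 : LinearIndependent k f1 :=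
    B1.linearIndependent.map' V₁.subtype (Submodule.ker_subtype V₁)
  have li2 : LinearIndependent k f2 :=
    B2.linearIndependent.map' V₂.subtype (Submodule.ker_subtype V₂)
  have hli : LinearIndependent k (Sum.elim f1 f2) :=
    li1.sum_type li2 (by rw [hsp1, hsp2]; exact hV12)
  have hcard : Fintype.card (Fin 2 ⊕ Fin 2) = Module.finrank k (Fin 4 → k) := by
    simp [Module.finrank_pi]
  set b0 := basisOfLinearIndependentOfCardEqFinrank hli hcard with hb0def
  have hb0 : ⇑b0 = Sum.elim f1 f2 := coe_basisOfLinearIndependentOfCardEqFinrank _ _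
  set b := b0.reindex finSumFinEquiv with hbdef
  have hb : ∀ p : Fin 2 ⊕ Fin 2, b (finSumFinEquiv p) = Sum.elim f1 f2 p := by
    intro p
    rw [hbdef, Module.Basis.reindex_apply, Equiv.symm_apply_apply, hb0]
  have e0 : b 0 = f1 0 := hb (Sum.inl 0)
  have e1 : b 1 = f1 1 := hb (Sum.inl 1)
  have e2 : b 2 = f2 0 := hb (Sum.inr 0)
  have e3 : b 3 = f2 1 := hb (Sum.inr 1)
  have hm0 : b 0 ∈ V₁ := by rw [e0]; exact (B1 0).2
  have hm1 : b 1 ∈ V₁ := by rw [e1]; exact (B1 1).2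
  have hm2 : b 2 ∈ V₂ := by rw [e2]; exact (B2 0).2
  have hm3 : b 3 ∈ V₂ := by rw [e3]; exact (B2 1).2
  have hrange1 : Set.range f1 = {b 0, b 1} := by
    ext x
    simp only [Set.mem_range, Fin.exists_fin_two, Set.mem_insert_iff, Set.mem_singleton_iff,
      e0, e1]
    exact or_congr eq_comm eq_comm
  have hrange2 : Set.range f2 = {b 2, b 3} := by
    ext x
    simp only [Set.mem_range, Fin.exists_fin_two, Set.mem_insert_iff, Set.mem_singleton_iff,
      e2, e3]
    exact or_congr eq_comm eq_comm
  have hspan1 : V₁ = Submodule.span k {b 0, b 1} := by rw [← hsp1, hrange1]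
  have hspan2 : V₂ = Submodule.span k {b 2, b 3} := by rw [← hsp2, hrange2]
  set L := b.equivFun.symm with hLdef
  have hLv : ∀ v : Fin 4 → k, L v = ∑ i, v i • b i := fun v => b.equivFun_symm_apply v
  have hmem1 : ∀ v : Fin 4 → k, (v 2 = 0 ∧ v 3 = 0) ↔ L v ∈ V₁ := by
    intro v
    constructor
    · rintro ⟨hv2, hv3⟩
      rw [hLv, Fin.sum_univ_four, hv2, hv3, zero_smul, zero_smul, add_zero, add_zero]
      exact add_mem (Submodule.smul_mem _ _ hm0) (Submodule.smul_mem _ _ hm1)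
    · intro hv
      rw [hspan1] at hv
      obtain ⟨a, c', hac⟩ := Submodule.mem_span_pair.mp hv
      have hLw : L (fun l => if l = 0 then a else if l = 1 then c' else 0) = L v := by
        rw [hLv, Fin.sum_univ_four]
        simpa using hac
      have hveq : (fun l : Fin 4 => if l = 0 then a else if l = 1 then c' else 0) = v :=
        L.injective hLw
      constructor
      · simpa using (congrFun hveq 2).symm
      · simpa using (congrFun hveq 3).symm
  have hmem2 : ∀ v : Fin 4 → k, (v 0 = 0 ∧ v 1 = 0) ↔ L v ∈ V₂ := by
    intro v
    constructor
    · rintro ⟨hv0, hv1⟩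
      rw [hLv, Fin.sum_univ_four, hv0, hv1, zero_smul, zero_smul, zero_add, zero_add]
      exact add_mem (Submodule.smul_mem _ _ hm2) (Submodule.smul_mem _ _ hm3)
    · intro hv
      rw [hspan2] at hv
      obtain ⟨a, c', hac⟩ := Submodule.mem_span_pair.mp hv
      have hLw : L (fun l => if l = 2 then a else if l = 3 then c' else 0) = L v := by
        rw [hLv, Fin.sum_univ_four]
        simpa using hac
      have hveq : (fun l : Fin 4 => if l = 2 then a else if l = 3 then c' else 0) = v :=
        L.injective hLw
      constructor
      · simpa using (congrFun hveq 0).symm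
      · simpa using (congrFun hveq 1).symm
  -- substitution maps
  set g : Fin 4 → MvPolynomial (Fin 4) k := fun i => ∑ j, C (b j i) * X j with hgdef
  set g' : Fin 4 → MvPolynomial (Fin 4) k :=
    fun i => ∑ j, C (b.equivFun (Pi.single j 1) i) * X j with hg'def
  have hg_hom : ∀ i, (g i).IsHomogeneous 1 := fun i =>
    Submodule.sum_mem (homogeneousSubmodule (Fin 4) k 1)
      (fun j _ => isHomogeneous_C_mul_X _ _)
  have hg'_hom : ∀ i, (g' i).IsHomogeneous 1 := fun i =>
    Submodule.sum_mem (homogeneousSubmodule (Fin 4) k 1)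
      (fun j _ => isHomogeneous_C_mul_X _ _)
  have hevalg : ∀ (v : Fin 4 → k) (i : Fin 4), eval v (g i) = L v i := by
    intro v i
    rw [hgdef]
    simp only [map_sum, eval_mul, eval_C, eval_X]
    rw [hLv, Fin.sum_univ_four, Fin.sum_univ_four]
    simp only [Pi.add_apply, Pi.smul_apply, smul_eq_mul]
    ring
  have hevalg' : ∀ (v : Fin 4 → k) (i : Fin 4), eval v (g' i) = L.symm v i := by
    intro v i
    rw [hg'def]
    simp only [map_sum, eval_mul, eval_C, eval_X]
    have hv : v = ∑ j : Fin 4, v j • (Pi.single j 1 : Fin 4 → k) := by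
      funext l
      rw [Finset.sum_apply]
      simp only [Pi.smul_apply, Pi.single_apply, smul_eq_mul, mul_ite, mul_one, mul_zero]
      rw [Finset.sum_ite_eq Finset.univ l v]
      simp
    have : L.symm v = ∑ j : Fin 4, v j • b.equivFun (Pi.single j 1) := by
      rw [hLdef, LinearEquiv.symm_symm]
      conv_lhs => rw [hv]
      rw [map_sum]
      exact Finset.sum_congr rfl fun j _ => map_smul _ _ _
    rw [this, Finset.sum_apply]
    apply Finset.sum_congr rfl
    intro j _
    rw [Pi.smul_apply, smul_eq_mul, mul_comm]
  have hEg : ∀ (v : Fin 4 → k) (f : MvPolynomial (Fin 4) k),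
      eval v (aeval g f) = eval (L v) f := by
    intro v f
    apply MvPolynomial.induction_on f
    · intro a; simp
    · intro p q hp hq; rw [map_add, map_add, hp, hq, map_add]
    · intro p j hp
      rw [map_mul, aeval_X, map_mul, hp, hevalg, map_mul, eval_X]
  have hEg' : ∀ (v : Fin 4 → k) (f : MvPolynomial (Fin 4) k),
      eval v (aeval g' f) = eval (L.symm v) f := by
    intro v f
    apply MvPolynomial.induction_on f
    · intro a; simp
    · intro p q hp hq; rw [map_add, map_add, hp, hq, map_add]
    · intro p j hp
      rw [map_mul, aeval_X, map_mul, hp, hevalg', map_mul, eval_X]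
  have hcomp1 : ∀ f : MvPolynomial (Fin 4) k, aeval g' (aeval g f) = f := fun f =>
    MvPolynomial.funext fun v => by
      rw [hEg', hEg, LinearEquiv.apply_symm_apply]
  have hcomp2 : ∀ f : MvPolynomial (Fin 4) k, aeval g (aeval g' f) = f := fun f =>
    MvPolynomial.funext fun v => by
      rw [hEg, hEg', LinearEquiv.symm_apply_apply]
  set Φ : MvPolynomial (Fin 4) k ≃ₗ[k] MvPolynomial (Fin 4) k :=
    LinearEquiv.ofLinear (aeval g).toLinearMap (aeval g').toLinearMap
      (LinearMap.ext fun f => hcomp2 f) (LinearMap.ext fun f => hcomp1 f) with hPhi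
  have hPhiApply : ∀ f, (Φ : MvPolynomial (Fin 4) k →ₗ[k] MvPolynomial (Fin 4) k) f
      = aeval g f := fun f => rfl
  have key : homogeneousSubmodule (Fin 4) k 2 ⊓
        vanishingSubmodule ((V₁ : Set (Fin 4 → k)) ∪ (V₂ : Set (Fin 4 → k)))
      = Submodule.comap (Φ : MvPolynomial (Fin 4) k →ₗ[k] MvPolynomial (Fin 4) k)
          (homogeneousSubmodule (Fin 4) k 2 ⊓
            vanishingSubmodule ((Stmt9.S1 : Set (Fin 4 → k)) ∪ Stmt9.S2)) := by
    ext f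
    simp only [Submodule.mem_comap, Submodule.mem_inf, mem_homogeneousSubmodule]
    constructor
    · rintro ⟨hhom, hvan⟩
      constructor
      · have := hhom.aeval g hg_hom
        rw [one_mul] at this
        exact this
      · intro v hv
        rw [hPhiApply f, hEg]
        apply hvan
        rcases hv with h | h
        · exact Or.inl ((hmem1 v).mp ⟨h.1, h.2⟩)
        · exact Or.inr ((hmem2 v).mp ⟨h.1, h.2⟩)
    · rintro ⟨hhom, hvan⟩
      constructor
      · have h' := hhom.aeval g' hg'_hom
        rw [one_mul] at h'
        rw [hPhiApply f, hcomp1 f] at h'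
        exact h'
      · intro w hw
        have hfw : eval w f = eval (L.symm w) (aeval g f) := by
          rw [hEg, LinearEquiv.apply_symm_apply]
        rw [hfw, ← hPhiApply f]
        apply hvan
        rcases hw with h | h
        · exact Or.inl ((hmem1 (L.symm w)).mpr (by
            rw [LinearEquiv.apply_symm_apply]; exact h))
        · exact Or.inr ((hmem2 (L.symm w)).mpr (by
            rw [LinearEquiv.apply_symm_apply]; exact h))
  rw [key, Submodule.comap_equiv_eq_map_symm, LinearEquiv.finrank_map_eq]
  exact Stmt9.std_finrank
end
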